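/- arXiv:1705.05915 — 10 statements merged into one kernel-verified Lean document; each statement's English description precedes it below -/
import Mathlib

section
/- For every permutation ((1),(2),...,(n)) of N, every point (x,z) of K_σ satisfies the polymatroid inequality Σ_{i=1}^n π_(i) x_(i) ≤ z − √σ, where π_(k) = √σ_(k) − √σ_(k−1) with σ_(0) = σ and σ_(k) = a_(k) + σ_(k−1). -/
lemma sqrt_diff_mono {t s c : ℝ} (ht : 0 ≤ t) (hts : t ≤ s) (hc : 0 ≤ c) :
    Real.sqrt (s + c) - Real.sqrt s ≤ Real.sqrt (t + c) - Real.sqrt t := by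
  rcases hc.eq_or_lt with rfl | hc
  · simp
  have hs : 0 ≤ s := ht.trans hts
  have h1 : (0:ℝ) < Real.sqrt (t + c) + Real.sqrt t := by
    have : 0 < Real.sqrt (t + c) := Real.sqrt_pos.2 (by linarith)
    have := Real.sqrt_nonneg t
    linarith
  have h2 : (0:ℝ) < Real.sqrt (s + c) + Real.sqrt s := by
    have : 0 < Real.sqrt (s + c) := Real.sqrt_pos.2 (by linarith)
    have := Real.sqrt_nonneg s
    linarith
  have e1 : Real.sqrt (s + c) - Real.sqrt s = c / (Real.sqrt (s + c) + Real.sqrt s) := by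
    rw [eq_div_iff h2.ne']
    have := Real.sq_sqrt (by linarith : (0:ℝ) ≤ s + c)
    have := Real.sq_sqrt hs
    nlinarith
  have e2 : Real.sqrt (t + c) - Real.sqrt t = c / (Real.sqrt (t + c) + Real.sqrt t) := by
    rw [eq_div_iff h1.ne']
    have := Real.sq_sqrt (by linarith : (0:ℝ) ≤ t + c)
    have := Real.sq_sqrt ht
    nlinarith
  rw [e1, e2]
  apply div_le_div_of_nonneg_left hc.le h1
  gcongr <;> linarith

lemma key_lemma (n : ℕ) (σ : ℝ) (hσ : 0 ≤ σ) (b : Fin n → ℝ) (hb : ∀ i, 0 < b i)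
    (S : Finset (Fin n)) :
    ∑ k ∈ S, (Real.sqrt (σ + ∑ j ∈ Finset.univ.filter (fun j => j ≤ k), b j)
        - Real.sqrt (σ + ∑ j ∈ Finset.univ.filter (fun j => j < k), b j))
      ≤ Real.sqrt (σ + ∑ k ∈ S, b k) - Real.sqrt σ := by
  induction S using Finset.induction_on_max with
  | empty => simp
  | insert m S hmS ih =>
    rw [Finset.sum_insert (fun h => lt_irrefl m (hmS m h)),
        Finset.sum_insert (fun h => lt_irrefl m (hmS m h))]
    have hT : (0:ℝ) ≤ ∑ k ∈ S, b k := Finset.sum_nonneg fun i _ => (hb i).le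
    have hsub : ∑ k ∈ S, b k ≤ ∑ j ∈ Finset.univ.filter (fun j => j < m), b j := by
      apply Finset.sum_le_sum_of_subset_of_nonneg
      · intro i hi
        simp [hmS i hi]
      · intro i _ _; exact (hb i).le
    have hle : ∑ j ∈ Finset.univ.filter (fun j => j ≤ m), b j
        = b m + ∑ j ∈ Finset.univ.filter (fun j => j < m), b j := by
      have : Finset.univ.filter (fun j => j ≤ m)
          = insert m (Finset.univ.filter (fun j => j < m)) := by
        ext i
        simp [le_iff_lt_or_eq, or_comm]
      rw [this, Finset.sum_insert (by simp)]
    have key : Real.sqrt (σ + ∑ j ∈ Finset.univ.filter (fun j => j ≤ m), b j)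
        - Real.sqrt (σ + ∑ j ∈ Finset.univ.filter (fun j => j < m), b j)
        ≤ Real.sqrt (σ + ∑ k ∈ S, b k + b m) - Real.sqrt (σ + ∑ k ∈ S, b k) := by
      have := sqrt_diff_mono (t := σ + ∑ k ∈ S, b k)
        (s := σ + ∑ j ∈ Finset.univ.filter (fun j => j < m), b j) (c := b m)
        (by linarith) (by linarith) (hb m).le
      calc Real.sqrt (σ + ∑ j ∈ Finset.univ.filter (fun j => j ≤ m), b j)
            - Real.sqrt (σ + ∑ j ∈ Finset.univ.filter (fun j => j < m), b j)
          = Real.sqrt ((σ + ∑ j ∈ Finset.univ.filter (fun j => j < m), b j) + b m)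
            - Real.sqrt (σ + ∑ j ∈ Finset.univ.filter (fun j => j < m), b j) := by
            rw [hle]; ring_nf
        _ ≤ _ := by
            have h := this
            calc _ ≤ Real.sqrt ((σ + ∑ k ∈ S, b k) + b m)
                - Real.sqrt (σ + ∑ k ∈ S, b k) := this
              _ = _ := by ring_nf
    have : Real.sqrt (σ + ∑ k ∈ S, b k) - Real.sqrt σ
        ≤ Real.sqrt (σ + ∑ k ∈ S, b k) - Real.sqrt σ := le_refl _
    calc _ ≤ (Real.sqrt (σ + ∑ k ∈ S, b k + b m) - Real.sqrt (σ + ∑ k ∈ S, b k))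
          + (Real.sqrt (σ + ∑ k ∈ S, b k) - Real.sqrt σ) := add_le_add key ih
      _ = Real.sqrt (σ + (b m + ∑ k ∈ S, b k)) - Real.sqrt σ := by ring_nf
      _ ≤ _ := by rw [add_comm (b m)]

/-- **Polymatroid inequality validity for `K_σ`.**
`N = {1,...,n}`, `σ ≥ 0`, `a i > 0`. `K_σ` consists of `(x, z)` with `x` binary,
`z ≥ 0` and `√(σ + ∑ i, a i * x i) ≤ z`. For any permutation `e` of `Fin n`
(so `e k` is the `k`-th element `(k)` of the permutation), with
`σ_(k) = σ + ∑_{j ≤ k} a (e j)` (and `σ_(0) = σ`), and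
`π_(k) = √σ_(k) − √σ_(k−1)`, every point of `K_σ` satisfies
`∑ k, π_(k) * x (e k) ≤ z − √σ`. -/
theorem polymatroid_inequality_valid
    (n : ℕ) (σ : ℝ) (a : Fin n → ℝ) (hσ : 0 ≤ σ) (ha : ∀ i, 0 < a i)
    (e : Equiv.Perm (Fin n)) (x : Fin n → ℝ) (z : ℝ)
    (hx : ∀ i, x i = 0 ∨ x i = 1) (hz : 0 ≤ z)
    (hK : Real.sqrt (σ + ∑ i, a i * x i) ≤ z) :
    ∑ k, (Real.sqrt (σ + ∑ j ∈ Finset.univ.filter (fun j => j ≤ k), a (e j))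
        - Real.sqrt (σ + ∑ j ∈ Finset.univ.filter (fun j => j < k), a (e j))) * x (e k)
      ≤ z - Real.sqrt σ := by
  set b : Fin n → ℝ := fun j => a (e j) with hb
  set S : Finset (Fin n) := Finset.univ.filter (fun k => x (e k) = 1) with hS
  have hsum : ∑ k, (Real.sqrt (σ + ∑ j ∈ Finset.univ.filter (fun j => j ≤ k), b j)
        - Real.sqrt (σ + ∑ j ∈ Finset.univ.filter (fun j => j < k), b j)) * x (e k)
      = ∑ k ∈ S, (Real.sqrt (σ + ∑ j ∈ Finset.univ.filter (fun j => j ≤ k), b j)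
        - Real.sqrt (σ + ∑ j ∈ Finset.univ.filter (fun j => j < k), b j)) := by
    rw [← Finset.sum_filter_add_sum_filter_not Finset.univ (fun k => x (e k) = 1)]
    have h1 : ∀ k ∈ Finset.univ.filter (fun k => ¬ x (e k) = 1),
        (Real.sqrt (σ + ∑ j ∈ Finset.univ.filter (fun j => j ≤ k), b j)
        - Real.sqrt (σ + ∑ j ∈ Finset.univ.filter (fun j => j < k), b j)) * x (e k) = 0 := by
      intro k hk
      simp only [Finset.mem_filter] at hk
      rcases hx (e k) with h | h
      · rw [h, mul_zero]
      · exact absurd h hk.2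
    rw [Finset.sum_eq_zero h1, add_zero]
    apply Finset.sum_congr rfl
    intro k hk
    simp only [hS, Finset.mem_filter] at hk
    rw [hk.2, mul_one]
  have hxsum : ∑ i, a i * x i = ∑ k ∈ S, b k := by
    rw [← Equiv.sum_comp e (fun i => a i * x i)]
    rw [← Finset.sum_filter_add_sum_filter_not Finset.univ (fun k => x (e k) = 1)]
    have h1 : ∀ k ∈ Finset.univ.filter (fun k => ¬ x (e k) = 1),
        a (e k) * x (e k) = 0 := by
      intro k hk
      simp only [Finset.mem_filter] at hk
      rcases hx (e k) with h | h
      · rw [h, mul_zero]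
      · exact absurd h hk.2
    rw [Finset.sum_eq_zero h1, add_zero]
    apply Finset.sum_congr rfl
    intro k hk
    simp only [hS, Finset.mem_filter] at hk
    rw [hk.2, mul_one]
  rw [hsum]
  calc _ ≤ Real.sqrt (σ + ∑ k ∈ S, b k) - Real.sqrt σ :=
        key_lemma n σ hσ b (fun i => ha (e i)) S
    _ ≤ z - Real.sqrt σ := by rw [← hxsum]; linarith
end

section
/- The convex hull of K_σ equals the set {(x,z) ∈ [0,1]^N × ℝ_{≥0} : π'x ≤ z − √σ for all π ∈ Π_σ}, where Π_σ is the set of coefficient vectors π arising from all permutations of N. -/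
/-- The polymatroid coefficient `π_(k)` for permutation `e`, with
`σ_(0) = σ`, `σ_(k) = a_(k) + σ_(k−1)`, `π_(k) = √σ_(k) − √σ_(k−1)`. -/
noncomputable def piCoef (n : ℕ) (σ : ℝ) (a : Fin n → ℝ) (e : Equiv.Perm (Fin n))
    (k : Fin n) : ℝ :=
  Real.sqrt (σ + ∑ j ∈ Finset.univ.filter (fun j => j ≤ k), a (e j))
    - Real.sqrt (σ + ∑ j ∈ Finset.univ.filter (fun j => j < k), a (e j))

noncomputable def aSeq (n : ℕ) (a : Fin n → ℝ) (e : Equiv.Perm (Fin n)) : ℕ → ℝ :=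
  fun j => if h : j < n then a (e ⟨j, h⟩) else 0

noncomputable def Fp (n : ℕ) (σ : ℝ) (a : Fin n → ℝ) (e : Equiv.Perm (Fin n)) : ℕ → ℝ :=
  fun m => Real.sqrt (σ + ∑ j ∈ Finset.range m, aSeq n a e j)

lemma bridge (n : ℕ) (a : Fin n → ℝ) (e : Equiv.Perm (Fin n)) (m : ℕ) :
    ∑ j ∈ Finset.range m, aSeq n a e j
      = ∑ j ∈ Finset.univ.filter (fun j : Fin n => (j : ℕ) < m), a (e j) := by
  have h1 : (∑ j ∈ Finset.univ.filter (fun j : Fin n => (j : ℕ) < m), a (e j))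
      = ∑ j ∈ Finset.range n, (if j < m then aSeq n a e j else 0) := by
    rw [Finset.sum_filter]
    rw [← Fin.sum_univ_eq_sum_range (fun j => if j < m then aSeq n a e j else 0) n]
    apply Finset.sum_congr rfl
    intro j _
    by_cases h : (j : ℕ) < m
    · simp only [h, if_true, aSeq, j.isLt, dif_pos, Fin.eta]
    · simp [h]
  rw [h1]
  rcases le_total m n with h | h
  · rw [← Finset.sum_range_add_sum_Ico _ h]
    have h2 : ∑ j ∈ Finset.Ico m n, (if j < m then aSeq n a e j else 0) = 0 := by
      apply Finset.sum_eq_zero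
      intro j hj
      have := (Finset.mem_Ico.mp hj).1
      simp [Nat.not_lt.mpr this]
    rw [h2, add_zero]
    apply Finset.sum_congr rfl
    intro j hj
    simp [Finset.mem_range.mp hj]
  · rw [← Finset.sum_range_add_sum_Ico _ h]
    have h2 : ∑ j ∈ Finset.Ico n m, aSeq n a e j = 0 := by
      apply Finset.sum_eq_zero
      intro j hj
      simp [aSeq, Nat.not_lt.mpr (Finset.mem_Ico.mp hj).1]
    rw [h2, add_zero]
    apply Finset.sum_congr rfl
    intro j hj
    simp [(Finset.mem_range.mp hj).trans_le h]

lemma piCoef_eq (n : ℕ) (σ : ℝ) (a : Fin n → ℝ) (e : Equiv.Perm (Fin n)) (k : Fin n) :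
    piCoef n σ a e k = Fp n σ a e ((k : ℕ) + 1) - Fp n σ a e (k : ℕ) := by
  unfold piCoef Fp
  rw [bridge, bridge]
  have h1 : Finset.filter (fun j : Fin n => j ≤ k) Finset.univ
      = Finset.filter (fun j : Fin n => (j : ℕ) < (k : ℕ) + 1) Finset.univ := by
    apply Finset.filter_congr; intro j _
    simp only [Fin.le_def]; omega
  have h2 : Finset.filter (fun j : Fin n => j < k) Finset.univ
      = Finset.filter (fun j : Fin n => (j : ℕ) < (k : ℕ)) Finset.univ := by
    apply Finset.filter_congr; intro j _
    exact Iff.rfl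
  rw [h1, h2]

lemma sqrt_diff_anti {s t c : ℝ} (hs : 0 ≤ s) (hst : s ≤ t) (hc : 0 ≤ c) :
    Real.sqrt (t + c) - Real.sqrt t ≤ Real.sqrt (s + c) - Real.sqrt s := by
  set d := Real.sqrt (s + c) - Real.sqrt s with hd
  have hd0 : 0 ≤ d := sub_nonneg.2 (Real.sqrt_le_sqrt (by linarith))
  have hsc : (Real.sqrt s + d) ^ 2 = s + c := by
    have h : Real.sqrt s + d = Real.sqrt (s + c) := by rw [hd]; ring
    rw [h, Real.sq_sqrt (by linarith)]
  have hts : Real.sqrt s ≤ Real.sqrt t := Real.sqrt_le_sqrt hst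
  have hs0 : 0 ≤ Real.sqrt s := Real.sqrt_nonneg s
  have ht0 : 0 ≤ Real.sqrt t := Real.sqrt_nonneg t
  have ht2 : Real.sqrt t ^ 2 = t := Real.sq_sqrt (hs.trans hst)
  have hs2 : Real.sqrt s ^ 2 = s := Real.sq_sqrt hs
  have h1 : Real.sqrt (t + c) ≤ Real.sqrt t + d := by
    rw [show Real.sqrt t + d = Real.sqrt ((Real.sqrt t + d) ^ 2) from
      (Real.sqrt_sq (by positivity)).symm]
    apply Real.sqrt_le_sqrt
    nlinarith [mul_le_mul_of_nonneg_right hts hd0]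
  linarith

lemma abel_id (g F : ℕ → ℝ) (N : ℕ) :
    ∑ m ∈ Finset.range (N + 1), (g m - g (m + 1)) * F m
      = g 0 * F 0 + (∑ k ∈ Finset.range N, g (k + 1) * (F (k + 1) - F k))
        - g (N + 1) * F N := by
  induction N with
  | zero => simp; ring
  | succ N ih =>
    rw [Finset.sum_range_succ, ih, Finset.sum_range_succ (f := fun k => g (k+1) * (F (k+1) - F k))]
    ring
noncomputable def bSeq (n : ℕ) (a : Fin n → ℝ) (e : Equiv.Perm (Fin n)) (x : Fin n → ℝ) : ℕ → ℝ :=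
  fun j => if h : j < n then a (e ⟨j, h⟩) * x (e ⟨j, h⟩) else 0

noncomputable def cSeq (n : ℕ) (σ : ℝ) (a : Fin n → ℝ) (e : Equiv.Perm (Fin n)) (x : Fin n → ℝ) : ℕ → ℝ :=
  fun j => if h : j < n then piCoef n σ a e ⟨j, h⟩ * x (e ⟨j, h⟩) else 0

noncomputable def Gp (n : ℕ) (σ : ℝ) (a : Fin n → ℝ) (e : Equiv.Perm (Fin n)) (x : Fin n → ℝ) : ℕ → ℝ :=
  fun m => Real.sqrt (σ + ∑ j ∈ Finset.range m, bSeq n a e x j)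

lemma forward_ineq (n : ℕ) (σ : ℝ) (a : Fin n → ℝ) (hσ : 0 ≤ σ) (ha : ∀ i, 0 < a i)
    (x : Fin n → ℝ) (hx : ∀ i, x i = 0 ∨ x i = 1) (e : Equiv.Perm (Fin n)) :
    ∑ k, piCoef n σ a e k * x (e k) ≤ Real.sqrt (σ + ∑ i, a i * x i) - Real.sqrt σ := by
  have hx01 : ∀ i, 0 ≤ x i ∧ x i ≤ 1 := by
    intro i; rcases hx i with h | h <;> simp [h]
  have ha0 : ∀ j, 0 ≤ aSeq n a e j := by
    intro j; unfold aSeq; split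
    · exact (ha _).le
    · exact le_refl 0
  have hb0 : ∀ j, 0 ≤ bSeq n a e x j := by
    intro j; unfold bSeq; split
    · exact mul_nonneg (ha _).le (hx01 _).1
    · exact le_refl 0
  have hba : ∀ j, bSeq n a e x j ≤ aSeq n a e j := by
    intro j; unfold bSeq aSeq; split
    · nlinarith [(hx01 (e ⟨j, by assumption⟩)).2, ha (e ⟨j, by assumption⟩)]
    · exact le_refl 0
  have key : ∀ m, ∑ j ∈ Finset.range m, cSeq n σ a e x j ≤ Gp n σ a e x m - Real.sqrt σ := by
    intro m
    induction m with
    | zero => simp [Gp]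
    | succ m ih =>
      rw [Finset.sum_range_succ]
      have hGsucc : Gp n σ a e x (m + 1)
          = Real.sqrt ((σ + ∑ j ∈ Finset.range m, bSeq n a e x j) + bSeq n a e x m) := by
        unfold Gp; rw [Finset.sum_range_succ]; ring_nf
      by_cases h : m < n
      · rcases hx (e ⟨m, h⟩) with h0 | h1
        · have hc : cSeq n σ a e x m = 0 := by simp [cSeq, h, h0]
          have hb : bSeq n a e x m = 0 := by simp [bSeq, h, h0]
          have hg : Gp n σ a e x (m + 1) = Gp n σ a e x m := by
            rw [hGsucc, hb, add_zero]; rfl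
          rw [hc, hg]; linarith
        · have hc : cSeq n σ a e x m = Fp n σ a e (m + 1) - Fp n σ a e m := by
            simp only [cSeq, h, dif_pos, h1, mul_one]
            rw [piCoef_eq]
          have hbm : bSeq n a e x m = aSeq n a e m := by
            simp [bSeq, aSeq, h, h1]
          have hFsucc : Fp n σ a e (m + 1)
              = Real.sqrt ((σ + ∑ j ∈ Finset.range m, aSeq n a e j) + aSeq n a e m) := by
            unfold Fp; rw [Finset.sum_range_succ]; ring_nf
          have hs : (0:ℝ) ≤ σ + ∑ j ∈ Finset.range m, bSeq n a e x j :=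
            add_nonneg hσ (Finset.sum_nonneg fun j _ => hb0 j)
          have hst : σ + ∑ j ∈ Finset.range m, bSeq n a e x j
              ≤ σ + ∑ j ∈ Finset.range m, aSeq n a e j := by
            have := Finset.sum_le_sum (fun j (_ : j ∈ Finset.range m) => hba j)
            linarith
          have hkey := sqrt_diff_anti hs hst (ha0 m)
          rw [hc, hGsucc, hbm, hFsucc]
          unfold Fp Gp at *
          linarith [hkey]
      · have hc : cSeq n σ a e x m = 0 := by simp [cSeq, h]
        have hb : bSeq n a e x m = 0 := by simp [bSeq, h]
        have hg : Gp n σ a e x (m + 1) = Gp n σ a e x m := by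
          rw [hGsucc, hb, add_zero]; rfl
        rw [hc, hg]; linarith
  have h1 : ∑ k, piCoef n σ a e k * x (e k) = ∑ j ∈ Finset.range n, cSeq n σ a e x j := by
    rw [← Fin.sum_univ_eq_sum_range (cSeq n σ a e x) n]
    apply Finset.sum_congr rfl
    intro k _
    simp [cSeq, k.isLt]
  have h2 : ∑ j ∈ Finset.range n, bSeq n a e x j = ∑ i, a i * x i := by
    rw [← Fin.sum_univ_eq_sum_range (bSeq n a e x) n,
      ← Equiv.sum_comp e (fun i => a i * x i)]
    apply Finset.sum_congr rfl
    intro k _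
    simp [bSeq, k.isLt]
  have hkn := key n
  unfold Gp at hkn
  rw [h2] at hkn
  rw [h1]
  exact hkn
noncomputable def ySeq (n : ℕ) (x : Fin n → ℝ) (e : Equiv.Perm (Fin n)) : ℕ → ℝ :=
  fun m => if h : m < n then x (e ⟨m, h⟩) else 0

noncomputable def yBar (n : ℕ) (x : Fin n → ℝ) (e : Equiv.Perm (Fin n)) : ℕ → ℝ
  | 0 => 1
  | (k + 1) => ySeq n x e k

noncomputable def wSeq (n : ℕ) (x : Fin n → ℝ) (e : Equiv.Perm (Fin n)) : ℕ → ℝ :=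
  fun m => yBar n x e m - yBar n x e (m + 1)

noncomputable def chiF (n : ℕ) (e : Equiv.Perm (Fin n)) (m : ℕ) : Fin n → ℝ :=
  fun i => if (e.symm i : ℕ) < m then 1 else 0
/-- **Convex hull of `K_σ`** (Atamtürk–Narayanan). The convex hull of
`K_σ = {(x,z) ∈ {0,1}^N × ℝ₊ : √(σ + ∑ a i x i) ≤ z}` equals
`{(x,z) ∈ [0,1]^N × ℝ₊ : π'x ≤ z − √σ for all π ∈ Π_σ}`, where `Π_σ` ranges
over the coefficient vectors of all permutations of `N`. -/
theorem convexHull_K_eq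
    (n : ℕ) (σ : ℝ) (a : Fin n → ℝ) (hσ : 0 ≤ σ) (ha : ∀ i, 0 < a i) :
    convexHull ℝ
      {p : (Fin n → ℝ) × ℝ | (∀ i, p.1 i = 0 ∨ p.1 i = 1) ∧ 0 ≤ p.2 ∧
        Real.sqrt (σ + ∑ i, a i * p.1 i) ≤ p.2}
    = {p : (Fin n → ℝ) × ℝ | (∀ i, 0 ≤ p.1 i ∧ p.1 i ≤ 1) ∧ 0 ≤ p.2 ∧
        ∀ e : Equiv.Perm (Fin n),
          ∑ k, piCoef n σ a e k * p.1 (e k) ≤ p.2 - Real.sqrt σ} := by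
  apply Set.Subset.antisymm
  · apply convexHull_min
    · rintro p ⟨hx, hz, hsq⟩
      refine ⟨fun i => by rcases hx i with h | h <;> simp [h], hz, fun e => ?_⟩
      have := forward_ineq n σ a hσ ha p.1 hx e
      linarith
    · rintro p ⟨hpx, hpz, hpe⟩ q ⟨hqx, hqz, hqe⟩ α β hα hβ hαβ
      refine ⟨fun i => ?_, ?_, fun e => ?_⟩
      · simp only [Prod.fst_add, Prod.smul_fst, Pi.add_apply, Pi.smul_apply, smul_eq_mul]
        constructor
        · have := (hpx i).1; have := (hqx i).1
          positivity
        · have h1 := (hpx i).2; have h2 := (hqx i).2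
          nlinarith [(hpx i).1, (hqx i).1]
      · simp only [Prod.snd_add, Prod.smul_snd, smul_eq_mul]
        positivity
      · simp only [Prod.fst_add, Prod.smul_fst, Prod.snd_add, Prod.smul_snd,
          Pi.add_apply, Pi.smul_apply, smul_eq_mul]
        have hsum : ∑ k, piCoef n σ a e k * (α * p.1 (e k) + β * q.1 (e k))
            = α * (∑ k, piCoef n σ a e k * p.1 (e k))
              + β * (∑ k, piCoef n σ a e k * q.1 (e k)) := by
          rw [Finset.mul_sum, Finset.mul_sum, ← Finset.sum_add_distrib]
          exact Finset.sum_congr rfl fun k _ => by ring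
        rw [hsum]
        have h1 := mul_le_mul_of_nonneg_left (hpe e) hα
        have h2 := mul_le_mul_of_nonneg_left (hqe e) hβ
        nlinarith [Real.sqrt_nonneg σ]
  · rintro p ⟨hx, hz, he⟩
    set x := p.1 with hxdef
    set e : Equiv.Perm (Fin n) := Tuple.sort (fun i => -(x i)) with hedef
    have hmono : Monotone ((fun i => -(x i)) ∘ e) := Tuple.monotone_sort (fun i => -(x i))
    have hy0 : ∀ m, 0 ≤ ySeq n x e m := by
      intro m; unfold ySeq; split
      · exact (hx _).1
      · exact le_refl 0
    have hy1 : ∀ m, ySeq n x e m ≤ 1 := by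
      intro m; unfold ySeq; split
      · exact (hx _).2
      · exact zero_le_one
    have hanti : ∀ j k : ℕ, j ≤ k → ySeq n x e k ≤ ySeq n x e j := by
      intro j k hjk
      by_cases hk : k < n
      · have hj : j < n := lt_of_le_of_lt hjk hk
        have := hmono (show (⟨j, hj⟩ : Fin n) ≤ ⟨k, hk⟩ from hjk)
        simp only [Function.comp_apply] at this
        unfold ySeq
        rw [dif_pos hk, dif_pos hj]
        linarith
      · unfold ySeq
        rw [dif_neg hk]
        split
        · exact (hx _).1
        · exact le_refl 0
    have hyn : ySeq n x e n = 0 := by unfold ySeq; rw [dif_neg (lt_irrefl n)]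
    have hw0 : ∀ m, 0 ≤ wSeq n x e m := by
      intro m
      unfold wSeq
      match m with
      | 0 => simp only [yBar]; linarith [hy1 0]
      | (k + 1) => simp only [yBar]; linarith [hanti k (k + 1) (Nat.le_succ k)]
    have hWsum : ∑ m ∈ Finset.range (n + 1), wSeq n x e m = 1 := by
      unfold wSeq
      rw [Finset.sum_range_sub' (yBar n x e) (n + 1)]
      simp only [yBar, hyn]
      ring
    -- reconstruction of x
    have hxeq : ∀ i, ∑ m ∈ Finset.range (n + 1), wSeq n x e m * chiF n e m i = x i := by
      intro i
      set k : ℕ := ((e.symm i : Fin n) : ℕ) with hkdef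
      have hk : k < n := (e.symm i).isLt
      have hterm : ∀ m, wSeq n x e m * chiF n e m i
          = if k + 1 ≤ m then wSeq n x e m else 0 := by
        intro m
        unfold chiF
        rw [← hkdef]
        by_cases h : k < m
        · rw [if_pos h, mul_one, if_pos (Nat.succ_le_of_lt h)]
        · rw [if_neg h, mul_zero, if_neg (by omega)]
      rw [Finset.sum_congr rfl (fun m _ => hterm m)]
      rw [Finset.range_eq_Ico,
        ← Finset.sum_Ico_consecutive _ (Nat.zero_le (k + 1)) (by omega : k + 1 ≤ n + 1)]
      have h1 : ∑ m ∈ Finset.Ico 0 (k + 1), (if k + 1 ≤ m then wSeq n x e m else 0) = 0 := by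
        apply Finset.sum_eq_zero
        intro m hm
        have := (Finset.mem_Ico.mp hm).2
        rw [if_neg (by omega)]
      have h2 : ∑ m ∈ Finset.Ico (k + 1) (n + 1), (if k + 1 ≤ m then wSeq n x e m else 0)
          = ∑ m ∈ Finset.Ico (k + 1) (n + 1), wSeq n x e m := by
        apply Finset.sum_congr rfl
        intro m hm
        rw [if_pos (Finset.mem_Ico.mp hm).1]
      rw [h1, h2, zero_add]
      have h3 : ∑ m ∈ Finset.Ico (k + 1) (n + 1), wSeq n x e m = ySeq n x e k := by
        rw [Finset.sum_Ico_eq_sub _ (by omega : k + 1 ≤ n + 1)]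
        unfold wSeq
        rw [Finset.sum_range_sub' (yBar n x e) (n + 1), Finset.sum_range_sub' (yBar n x e) (k + 1)]
        simp only [yBar, hyn]
        ring
      rw [h3]
      unfold ySeq
      rw [dif_pos hk]
      have h4 : (⟨k, hk⟩ : Fin n) = e.symm i := by
        apply Fin.ext; exact hkdef
      rw [h4, Equiv.apply_symm_apply]
    -- the z-coordinate inequality (Abel summation)
    have hFle : ∑ m ∈ Finset.range (n + 1), wSeq n x e m * Fp n σ a e m ≤ p.2 := by
      have habel := abel_id (yBar n x e) (Fp n σ a e) n
      have hw : ∀ m, wSeq n x e m * Fp n σ a e m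
          = (yBar n x e m - yBar n x e (m + 1)) * Fp n σ a e m := fun m => rfl
      rw [Finset.sum_congr rfl (fun m _ => hw m), habel]
      have hinner : ∑ j ∈ Finset.range n, yBar n x e (j + 1) * (Fp n σ a e (j + 1) - Fp n σ a e j)
          = ∑ kk, piCoef n σ a e kk * x (e kk) := by
        rw [← Fin.sum_univ_eq_sum_range
          (fun j => yBar n x e (j + 1) * (Fp n σ a e (j + 1) - Fp n σ a e j)) n]
        apply Finset.sum_congr rfl
        intro kk _
        have h1 : yBar n x e ((kk : ℕ) + 1) = x (e kk) := by
          simp only [yBar, ySeq]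
          rw [dif_pos kk.isLt]
        rw [h1, ← piCoef_eq]
        ring
      rw [hinner]
      have hF0 : Fp n σ a e 0 = Real.sqrt σ := by
        unfold Fp; simp
      have h2 : yBar n x e (n + 1) = 0 := hyn
      have := he e
      rw [hF0, h2]
      simp only [yBar]
      nlinarith [Real.sqrt_nonneg σ, Fp n σ a e n, this]
    set t : ℝ := p.2 - ∑ m ∈ Finset.range (n + 1), wSeq n x e m * Fp n σ a e m with htdef
    have ht : 0 ≤ t := by rw [htdef]; linarith
    -- each vertex lies in K
    have hmemK : ∀ m ∈ Finset.range (n + 1),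
        ((chiF n e m, Fp n σ a e m + t) : (Fin n → ℝ) × ℝ) ∈
          {p : (Fin n → ℝ) × ℝ | (∀ i, p.1 i = 0 ∨ p.1 i = 1) ∧ 0 ≤ p.2 ∧
            Real.sqrt (σ + ∑ i, a i * p.1 i) ≤ p.2} := by
      intro m _
      refine ⟨fun i => ?_, ?_, ?_⟩
      · by_cases h : ((e.symm i : Fin n) : ℕ) < m
        · right; simp [chiF, h]
        · left; simp [chiF, h]
      · have := Real.sqrt_nonneg (σ + ∑ j ∈ Finset.range m, aSeq n a e j)
        show (0:ℝ) ≤ Fp n σ a e m + t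
        unfold Fp
        linarith
      · show Real.sqrt (σ + ∑ i, a i * chiF n e m i) ≤ Fp n σ a e m + t
        have hAchi : ∑ i, a i * chiF n e m i = ∑ j ∈ Finset.range m, aSeq n a e j := by
          rw [← Equiv.sum_comp e (fun i => a i * chiF n e m i), bridge, Finset.sum_filter]
          apply Finset.sum_congr rfl
          intro j _
          unfold chiF
          rw [Equiv.symm_apply_apply]
          by_cases h : (j : ℕ) < m
          · rw [if_pos h, if_pos h, mul_one]
          · rw [if_neg h, if_neg h, mul_zero]
        rw [hAchi]
        have : Real.sqrt (σ + ∑ j ∈ Finset.range m, aSeq n a e j) = Fp n σ a e m := rfl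
        rw [this]
        linarith
    -- conclude
    have hsum_eq : ∑ m ∈ Finset.range (n + 1),
        wSeq n x e m • ((chiF n e m, Fp n σ a e m + t) : (Fin n → ℝ) × ℝ) = p := by
      have hfst : (∑ m ∈ Finset.range (n + 1),
          wSeq n x e m • ((chiF n e m, Fp n σ a e m + t) : (Fin n → ℝ) × ℝ)).1 = p.1 := by
        rw [Prod.fst_sum]
        funext i
        rw [Finset.sum_apply]
        simp only [Prod.smul_fst, Pi.smul_apply, smul_eq_mul]
        exact hxeq i
      have hsnd : (∑ m ∈ Finset.range (n + 1),
          wSeq n x e m • ((chiF n e m, Fp n σ a e m + t) : (Fin n → ℝ) × ℝ)).2 = p.2 := by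
        rw [Prod.snd_sum]
        simp only [Prod.smul_snd, smul_eq_mul]
        have : ∀ m, wSeq n x e m * (Fp n σ a e m + t)
            = wSeq n x e m * Fp n σ a e m + wSeq n x e m * t := fun m => mul_add _ _ _
        rw [Finset.sum_congr rfl (fun m _ => this m), Finset.sum_add_distrib,
          ← Finset.sum_mul, hWsum, one_mul]
        rw [htdef]
        ring
      exact Prod.ext hfst hsnd
    rw [← hsum_eq]
    exact (convex_convexHull ℝ _).sum_mem (fun m _ => hw0 m) hWsum
      (fun m hm => subset_convexHull ℝ _ (hmemK m hm))
end

section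
/- Let (x̄, z̄) ∈ [0,1]^N × ℝ_{≥0} with coordinates ordered so that x̄_1 ≥ x̄_2 ≥ ... ≥ x̄_n. If (x̄, z̄) does not belong to the convex hull of K_σ, then it violates the polymatroid inequality corresponding to the identity permutation, i.e., Σ_{i=1}^n π_i x̄_i > z̄ − √σ where π_k = √σ_k − √σ_{k−1}, σ_0 = σ, σ_k = a_k + σ_{k−1}. Equivalently, among all permutations, one sorting the coordinates of x̄ in nonincreasing order maximizes π'x̄. -/
/-- The polymatroid coefficient `π_k` for the identity permutation:
`σ_0 = σ`, `σ_k = a_k + σ_{k−1}`, `π_k = √σ_k − √σ_{k−1}`. -/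
noncomputable def piCoefId (n : ℕ) (σ : ℝ) (a : Fin n → ℝ) (k : Fin n) : ℝ :=
  Real.sqrt (σ + ∑ j ∈ Finset.univ.filter (fun j => j ≤ k), a j)
    - Real.sqrt (σ + ∑ j ∈ Finset.univ.filter (fun j => j < k), a j)

private lemma tele_sum (X : ℕ → ℝ) (m N : ℕ) (h : m < N) :
    ∑ k ∈ Finset.range N, (if m < k then (1:ℝ) else 0) * (X k - X (k+1))
      = X (m+1) - X N := by
  induction N with
  | zero => omega
  | succ N ih =>
    rw [Finset.sum_range_succ]
    rcases Nat.lt_or_ge m N with hm | hm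
    · rw [ih hm, if_pos hm]; ring
    · have hmN : m = N := by omega
      subst hmN
      have hz : ∀ k ∈ Finset.range m,
          (if m < k then (1:ℝ) else 0) * (X k - X (k+1)) = 0 := by
        intro k hk
        simp only [Finset.mem_range] at hk
        rw [if_neg (by omega)]; ring
      rw [Finset.sum_eq_zero hz, if_neg (lt_irrefl m)]; ring

private lemma abel_sum (X s : ℕ → ℝ) (N : ℕ) :
    ∑ k ∈ Finset.range (N+1), (X k - X (k+1)) * s k
      = X 0 * s 0 - X (N+1) * s N
        + ∑ i ∈ Finset.range N, X (i+1) * (s (i+1) - s i) := by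
  induction N with
  | zero => simp [Finset.sum_range_one]; ring
  | succ N ih =>
    rw [Finset.sum_range_succ, ih, Finset.sum_range_succ]
    ring

/-- **Separation for `conv(K_σ)`.** Let `(x̄, z̄) ∈ [0,1]^N × ℝ₊` with
`x̄ 1 ≥ x̄ 2 ≥ ... ≥ x̄ n`. If `(x̄, z̄)` is not in the convex hull of
`K_σ = {(x,z) ∈ {0,1}^N × ℝ₊ : √(σ + ∑ a i x i) ≤ z}`, then it violates the
polymatroid inequality of the identity permutation:
`∑ k, π_k x̄_k > z̄ − √σ`. -/
theorem separation_polymatroid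
    (n : ℕ) (σ : ℝ) (a : Fin n → ℝ) (hσ : 0 ≤ σ) (ha : ∀ i, 0 < a i)
    (x : Fin n → ℝ) (z : ℝ)
    (hx01 : ∀ i, 0 ≤ x i ∧ x i ≤ 1) (hz : 0 ≤ z)
    (hsort : ∀ i j : Fin n, i ≤ j → x j ≤ x i)
    (hnot : (x, z) ∉ convexHull ℝ
      {p : (Fin n → ℝ) × ℝ | (∀ i, p.1 i = 0 ∨ p.1 i = 1) ∧ 0 ≤ p.2 ∧
        Real.sqrt (σ + ∑ i, a i * p.1 i) ≤ p.2}) :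
    z - Real.sqrt σ < ∑ k, piCoefId n σ a k * x k := by
  classical
  by_contra hcon
  push_neg at hcon
  apply hnot
  -- the extended sequence 1, x 0, x 1, ..., x (n-1), 0
  set X : ℕ → ℝ := fun m => if m = 0 then 1 else if h : m - 1 < n then x ⟨m - 1, h⟩ else 0
    with hX
  have hX0 : X 0 = 1 := by simp [hX]
  have hXs : ∀ j : ℕ, (h : j < n) → X (j+1) = x ⟨j, h⟩ := by
    intro j h; simp [hX, h]
  have hXtop : ∀ m : ℕ, n < m → X m = 0 := by
    intro m hm
    simp only [hX]
    rw [if_neg (by omega), dif_neg (by omega)]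
  -- weights
  set w : Fin (n+1) → ℝ := fun k => X k - X (k+1) with hw
  -- partial square roots
  set s : ℕ → ℝ := fun m =>
    Real.sqrt (σ + ∑ j ∈ Finset.univ.filter (fun j : Fin n => (j:ℕ) < m), a j) with hs
  have hs0 : s 0 = Real.sqrt σ := by simp [hs]
  have hpi : ∀ i : Fin n, piCoefId n σ a i = s ((i:ℕ)+1) - s (i:ℕ) := by
    intro i
    unfold piCoefId
    simp only [hs]
    have e1 : Finset.univ.filter (fun j : Fin n => j ≤ i)
        = Finset.univ.filter (fun j : Fin n => (j:ℕ) < (i:ℕ)+1) := by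
      ext j
      simp only [Finset.mem_filter, Finset.mem_univ, true_and, Fin.le_def]
      omega
    have e2 : Finset.univ.filter (fun j : Fin n => j < i)
        = Finset.univ.filter (fun j : Fin n => (j:ℕ) < (i:ℕ)) := by
      ext j
      simp only [Finset.mem_filter, Finset.mem_univ, true_and, Fin.lt_def]
    rw [e1, e2]
  -- the slack
  set δ : ℝ := z - (Real.sqrt σ + ∑ k, piCoefId n σ a k * x k) with hδ
  have hδ0 : 0 ≤ δ := by
    simp only [hδ]; linarith
  -- the points
  set p : Fin (n+1) → (Fin n → ℝ) × ℝ := fun k =>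
    (fun j : Fin n => if (j:ℕ) < (k:ℕ) then (1:ℝ) else 0, s k + δ) with hp
  -- weights are nonneg
  have hwpos : ∀ k : Fin (n+1), 0 ≤ w k := by
    intro k
    simp only [hw, sub_nonneg]
    rcases Nat.eq_zero_or_pos (k:ℕ) with h0 | h0
    · rw [h0, hX0]
      by_cases h1 : 0 < n
      · rw [hXs 0 h1]
        exact (hx01 _).2
      · rw [hXtop 1 (by omega)]; norm_num
    · obtain ⟨j, hkj⟩ : ∃ j, (k:ℕ) = j + 1 := ⟨(k:ℕ) - 1, by omega⟩
      have hj : j < n := by omega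
      rw [hkj, hXs j hj]
      by_cases h2 : j + 1 < n
      · rw [hXs (j+1) h2]
        exact hsort ⟨j, hj⟩ ⟨j+1, h2⟩ (by simp [Fin.le_def])
      · rw [hXtop (j+2) (by omega)]
        exact (hx01 _).1
  -- weights sum to 1
  have hwsum : ∑ k : Fin (n+1), w k = 1 := by
    simp only [hw]
    rw [Fin.sum_univ_eq_sum_range (fun m => X m - X (m+1)) (n+1),
      Finset.sum_range_sub' X (n+1), hX0, hXtop (n+1) (by omega), sub_zero]
  -- each point lies in the set
  have hmem : ∀ k : Fin (n+1), p k ∈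
      {p : (Fin n → ℝ) × ℝ | (∀ i, p.1 i = 0 ∨ p.1 i = 1) ∧ 0 ≤ p.2 ∧
        Real.sqrt (σ + ∑ i, a i * p.1 i) ≤ p.2} := by
    intro k
    refine ⟨fun i => ?_, ?_, ?_⟩
    · by_cases h : (i:ℕ) < (k:ℕ) <;> simp [hp, h]
    · simp only [hp]
      have := Real.sqrt_nonneg (σ + ∑ j ∈ Finset.univ.filter (fun j : Fin n => (j:ℕ) < (k:ℕ)), a j)
      simp only [hs]
      linarith
    · simp only [hp]
      have heq : (σ + ∑ i, a i * (if (i:ℕ) < (k:ℕ) then (1:ℝ) else 0))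
          = σ + ∑ j ∈ Finset.univ.filter (fun j : Fin n => (j:ℕ) < (k:ℕ)), a j := by
        congr 1
        rw [Finset.sum_filter]
        congr 1
        ext i
        by_cases h : (i:ℕ) < (k:ℕ) <;> simp [h]
      rw [heq]
      simp only [hs]
      linarith
  -- the convex combination equals (x, z)
  have hcomb : ∑ k : Fin (n+1), w k • p k = (x, z) := by
    have hfst : (∑ k : Fin (n+1), w k • p k).1 = x := by
      rw [Prod.fst_sum]
      funext j
      rw [Finset.sum_apply]
      have : ∀ k : Fin (n+1), ((w k • p k).1) j
          = (if (j:ℕ) < (k:ℕ) then (1:ℝ) else 0) * (X (k:ℕ) - X ((k:ℕ)+1)) := by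
        intro k
        simp only [hp, hw, Prod.smul_fst, Pi.smul_apply, smul_eq_mul]
        ring
      rw [Finset.sum_congr rfl (fun k _ => this k)]
      rw [Fin.sum_univ_eq_sum_range
        (fun m => (if (j:ℕ) < m then (1:ℝ) else 0) * (X m - X (m+1))) (n+1)]
      rw [tele_sum X (j:ℕ) (n+1) (by omega)]
      rw [hXtop (n+1) (by omega), hXs (j:ℕ) j.isLt, sub_zero]
    have hsnd : (∑ k : Fin (n+1), w k • p k).2 = z := by
      rw [Prod.snd_sum]
      have h1 : ∀ k : Fin (n+1), (w k • p k).2 = w k * s (k:ℕ) + w k * δ := by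
        intro k
        simp only [hp, hw, Prod.smul_snd, smul_eq_mul]
        ring
      rw [Finset.sum_congr rfl (fun k _ => h1 k), Finset.sum_add_distrib,
        ← Finset.sum_mul, hwsum, one_mul]
      have h2 : ∑ k : Fin (n+1), w k * s (k:ℕ)
          = Real.sqrt σ + ∑ i : Fin n, piCoefId n σ a i * x i := by
        simp only [hw]
        rw [Fin.sum_univ_eq_sum_range (fun m => (X m - X (m+1)) * s m) (n+1),
          abel_sum X s n, hX0, hXtop (n+1) (by omega), one_mul, zero_mul, sub_zero,
          hs0]
        congr 1
        rw [← Fin.sum_univ_eq_sum_range (fun m => X (m+1) * (s (m+1) - s m)) n]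
        apply Finset.sum_congr rfl
        intro i _
        rw [hpi i, hXs (i:ℕ) i.isLt]
        ring
      rw [h2]
      simp only [hδ]
      ring
    exact Prod.ext hfst hsnd
  -- conclude membership in the convex hull
  have hmem' : Finset.univ.centerMass w p ∈ convexHull ℝ
      {p : (Fin n → ℝ) × ℝ | (∀ i, p.1 i = 0 ∨ p.1 i = 1) ∧ 0 ≤ p.2 ∧
        Real.sqrt (σ + ∑ i, a i * p.1 i) ≤ p.2} :=
    Finset.centerMass_mem_convexHull _ (fun k _ => hwpos k)
      (by rw [hwsum]; norm_num) (fun k _ => hmem k)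
  rwa [Finset.centerMass_eq_of_sum_1 _ _ hwsum, hcomb] at hmem'
end

section
/- For every subset T ⊆ M and every permutation ((1),...,(n)) of N, every point (x,y,z) of L_σ satisfies the inequality Σ_{i=1}^n π_(i) x_(i) + √(σ + Σ_{i∈T} c_i y_i²) ≤ z, where π is the polymatroid coefficient vector computed with starting value σ + c(T), i.e., σ_(0) = σ + Σ_{i∈T} c_i, σ_(k) = a_(k) + σ_(k−1), and π_(k) = √σ_(k) − √σ_(k−1). -/
lemma sqrt_diff_mono_s3 {s t A : ℝ} (hs : 0 ≤ s) (hst : s ≤ t) (hA : 0 ≤ A) :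
    Real.sqrt (t + A) - Real.sqrt t ≤ Real.sqrt (s + A) - Real.sqrt s := by
  have ht : (0:ℝ) ≤ t := le_trans hs hst
  have h1 : Real.sqrt (t + A) * Real.sqrt s = Real.sqrt ((t + A) * s) :=
    (Real.sqrt_mul (by linarith) s).symm
  have h2 : Real.sqrt (s + A) * Real.sqrt t = Real.sqrt ((s + A) * t) :=
    (Real.sqrt_mul (by linarith) t).symm
  have h3 : Real.sqrt ((t + A) * s) ≤ Real.sqrt ((s + A) * t) :=
    Real.sqrt_le_sqrt (by nlinarith)
  have e1 := Real.sq_sqrt hs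
  have e2 := Real.sq_sqrt ht
  have e3 := Real.sq_sqrt (by linarith : (0:ℝ) ≤ s + A)
  have e4 := Real.sq_sqrt (by linarith : (0:ℝ) ≤ t + A)
  have n1 := Real.sqrt_nonneg s
  have n2 := Real.sqrt_nonneg t
  have n3 := Real.sqrt_nonneg (s + A)
  have n4 := Real.sqrt_nonneg (t + A)
  nlinarith [sq_nonneg (Real.sqrt (t+A) + Real.sqrt s - Real.sqrt (s+A) - Real.sqrt t),
             sq_nonneg (Real.sqrt (t+A) + Real.sqrt s + Real.sqrt (s+A) + Real.sqrt t)]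

/-- **Valid inequalities for the mixed-integer set `L_σ`.**
`L_σ = {(x,y,z) ∈ {0,1}^N × [0,1]^M × ℝ₊ : √(σ + ∑_N a i x i + ∑_M c i y i²) ≤ z}`
with `σ ≥ 0`, `a i > 0`, `c i > 0`. For every `T ⊆ M` and every permutation `e`
of `N`, with polymatroid coefficients `π` computed starting from
`σ_(0) = σ + c(T)`, every point of `L_σ` satisfies
`π'x + √(σ + ∑_{i∈T} c i y i²) ≤ z`. -/
theorem valid_inequality_L
    (n m : ℕ) (σ : ℝ) (a : Fin n → ℝ) (c : Fin m → ℝ)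
    (hσ : 0 ≤ σ) (ha : ∀ i, 0 < a i) (hc : ∀ i, 0 < c i)
    (T : Finset (Fin m)) (e : Equiv.Perm (Fin n))
    (x : Fin n → ℝ) (y : Fin m → ℝ) (z : ℝ)
    (hx : ∀ i, x i = 0 ∨ x i = 1) (hy : ∀ i, 0 ≤ y i ∧ y i ≤ 1) (hz : 0 ≤ z)
    (hL : Real.sqrt (σ + ∑ i, a i * x i + ∑ i, c i * y i ^ 2) ≤ z) :
    ∑ k, (Real.sqrt ((σ + ∑ i ∈ T, c i)
            + ∑ j ∈ Finset.univ.filter (fun j => j ≤ k), a (e j))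
        - Real.sqrt ((σ + ∑ i ∈ T, c i)
            + ∑ j ∈ Finset.univ.filter (fun j => j < k), a (e j))) * x (e k)
      + Real.sqrt (σ + ∑ i ∈ T, c i * y i ^ 2) ≤ z := by
  set σ₀ : ℝ := σ + ∑ i ∈ T, c i with hσ₀def
  have hcT : (0:ℝ) ≤ ∑ i ∈ T, c i :=
    Finset.sum_nonneg (fun i _ => (hc i).le)
  have hσ₀ : 0 ≤ σ₀ := by positivity
  -- bounds on x
  have hx01 : ∀ i, 0 ≤ x i ∧ x i ≤ 1 := by
    intro i; rcases hx i with h | h <;> simp [h]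
  have hax_nonneg : ∀ i, 0 ≤ a i * x i := fun i =>
    mul_nonneg (ha i).le (hx01 i).1
  -- the telescoping function
  set F : ℕ → ℝ := fun k =>
    Real.sqrt (σ₀ + ∑ j ∈ Finset.univ.filter (fun j : Fin n => (j:ℕ) < k),
      a (e j) * x (e j)) with hFdef
  -- partial sums bounds
  have hBnonneg : ∀ k : ℕ,
      0 ≤ ∑ j ∈ Finset.univ.filter (fun j : Fin n => (j:ℕ) < k), a (e j) * x (e j) :=
    fun k => Finset.sum_nonneg (fun j _ => hax_nonneg (e j))
  -- step inequality
  have hstep : ∀ k : Fin n,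
      (Real.sqrt (σ₀ + ∑ j ∈ Finset.univ.filter (fun j => j ≤ k), a (e j))
        - Real.sqrt (σ₀ + ∑ j ∈ Finset.univ.filter (fun j => j < k), a (e j))) * x (e k)
      ≤ F ((k:ℕ) + 1) - F (k:ℕ) := by
    intro k
    have hins1 : (Finset.univ.filter (fun j : Fin n => j ≤ k))
        = insert k (Finset.univ.filter (fun j : Fin n => j < k)) := by
      ext j
      simp only [Finset.mem_filter, Finset.mem_univ, true_and, Finset.mem_insert]
      constructor
      · intro h
        rcases lt_or_eq_of_le h with h' | h'
        · exact Or.inr h'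
        · exact Or.inl h'
      · rintro (rfl | h)
        · exact le_refl _
        · exact le_of_lt h
    have hins2 : (Finset.univ.filter (fun j : Fin n => (j:ℕ) < (k:ℕ) + 1))
        = insert k (Finset.univ.filter (fun j : Fin n => (j:ℕ) < (k:ℕ)))  := by
      ext j
      simp only [Finset.mem_filter, Finset.mem_univ, true_and, Finset.mem_insert]
      constructor
      · intro h
        rcases Nat.lt_succ_iff_lt_or_eq.mp h with h' | h'
        · exact Or.inr h'
        · exact Or.inl (Fin.ext h')
      · rintro (rfl | h)
        · omega
        · omega
    have hnm1 : k ∉ Finset.univ.filter (fun j : Fin n => j < k) := by simp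
    have hnm2 : k ∉ Finset.univ.filter (fun j : Fin n => (j:ℕ) < (k:ℕ)) := by simp
    have hsum1 : ∑ j ∈ Finset.univ.filter (fun j : Fin n => j ≤ k), a (e j)
        = a (e k) + ∑ j ∈ Finset.univ.filter (fun j : Fin n => j < k), a (e j) := by
      rw [hins1, Finset.sum_insert hnm1]
    have hsum2 : ∑ j ∈ Finset.univ.filter (fun j : Fin n => (j:ℕ) < (k:ℕ)+1),
          a (e j) * x (e j)
        = a (e k) * x (e k)
          + ∑ j ∈ Finset.univ.filter (fun j : Fin n => (j:ℕ) < (k:ℕ)), a (e j) * x (e j) := by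
      rw [hins2, Finset.sum_insert hnm2]
    have hfilt : (Finset.univ.filter (fun j : Fin n => j < k))
        = Finset.univ.filter (fun j : Fin n => (j:ℕ) < (k:ℕ)) := by
      ext j
      simp only [Finset.mem_filter, Finset.mem_univ, true_and]
      exact Fin.lt_def
    set B : ℝ := ∑ j ∈ Finset.univ.filter (fun j : Fin n => (j:ℕ) < (k:ℕ)),
      a (e j) * x (e j) with hBdef
    set A : ℝ := ∑ j ∈ Finset.univ.filter (fun j : Fin n => j < k), a (e j) with hAdef
    have hBA : B ≤ A := by
      rw [hBdef, hAdef, hfilt]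
      refine Finset.sum_le_sum (fun j _ => ?_)
      have := (hx01 (e j)).2
      nlinarith [(ha (e j)).le]
    have hB0 : 0 ≤ B := hBnonneg _
    rcases hx (e k) with hxe | hxe
    · -- x = 0 : both sides are 0
      rw [hxe, mul_zero]
      have : F ((k:ℕ)+1) = F (k:ℕ) := by
        simp only [hFdef]
        rw [hsum2, hxe, mul_zero, zero_add]
      rw [this]; linarith
    · -- x = 1
      rw [hxe, mul_one]
      simp only [hFdef]
      rw [hsum2, hxe, mul_one, hsum1]
      have key := sqrt_diff_mono_s3 (s := σ₀ + B) (t := σ₀ + A) (A := a (e k))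
        (by linarith) (by linarith) (ha (e k)).le
      have r1 : σ₀ + A + a (e k) = σ₀ + (a (e k) + A) := by ring
      have r2 : σ₀ + B + a (e k) = σ₀ + (a (e k) * 1 + B) := by ring
      rw [r1, r2] at key
      convert key using 3 <;> ring
  -- sum the step inequalities and telescope
  have htel : ∑ k : Fin n,
      (Real.sqrt (σ₀ + ∑ j ∈ Finset.univ.filter (fun j => j ≤ k), a (e j))
        - Real.sqrt (σ₀ + ∑ j ∈ Finset.univ.filter (fun j => j < k), a (e j))) * x (e k)
      ≤ F n - F 0 := by
    calc _ ≤ ∑ k : Fin n, (F ((k:ℕ)+1) - F (k:ℕ)) :=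
          Finset.sum_le_sum (fun k _ => hstep k)
      _ = ∑ k ∈ Finset.range n, (F (k+1) - F k) :=
          Fin.sum_univ_eq_sum_range (fun k => F (k+1) - F k) n
      _ = F n - F 0 := Finset.sum_range_sub F n
  have hF0 : F 0 = Real.sqrt σ₀ := by
    simp [hFdef]
  have hFn : F n = Real.sqrt (σ₀ + ∑ i, a i * x i) := by
    have : (Finset.univ.filter (fun j : Fin n => (j:ℕ) < n)) = Finset.univ := by
      ext j; simp [j.isLt]
    simp only [hFdef, this]
    rw [Equiv.sum_comp e (fun i => a i * x i)]
  rw [hF0, hFn] at htel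
  -- now combine
  set Sax : ℝ := ∑ i, a i * x i with hSax
  have hSax0 : 0 ≤ Sax := Finset.sum_nonneg (fun i _ => hax_nonneg i)
  set u : ℝ := ∑ i ∈ T, c i * y i ^ 2 with hu
  have hu0 : 0 ≤ u :=
    Finset.sum_nonneg (fun i _ => mul_nonneg (hc i).le (sq_nonneg _))
  have huc : u ≤ ∑ i ∈ T, c i := by
    refine Finset.sum_le_sum (fun i _ => ?_)
    have h1 := (hy i).1
    have h2 := (hy i).2
    nlinarith [mul_nonneg (mul_nonneg (hc i).le (by linarith : (0:ℝ) ≤ 1 - y i)) (by linarith : (0:ℝ) ≤ 1 + y i)]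
  have key2 : Real.sqrt (σ₀ + Sax) - Real.sqrt σ₀
      ≤ Real.sqrt ((σ + u) + Sax) - Real.sqrt (σ + u) := by
    have := sqrt_diff_mono_s3 (s := σ + u) (t := σ₀) (A := Sax)
      (by linarith) (by rw [hσ₀def]; linarith) hSax0
    linarith
  have hub : Real.sqrt ((σ + u) + Sax)
      ≤ Real.sqrt (σ + ∑ i, a i * x i + ∑ i, c i * y i ^ 2) := by
    apply Real.sqrt_le_sqrt
    have : u ≤ ∑ i, c i * y i ^ 2 := by
      apply Finset.sum_le_sum_of_subset_of_nonneg (Finset.subset_univ T)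
      intro i _ _
      exact mul_nonneg (hc i).le (sq_nonneg _)
    simp only [hSax]
    linarith
  calc ∑ k, (Real.sqrt (σ₀ + ∑ j ∈ Finset.univ.filter (fun j => j ≤ k), a (e j))
        - Real.sqrt (σ₀ + ∑ j ∈ Finset.univ.filter (fun j => j < k), a (e j))) * x (e k)
      + Real.sqrt (σ + u)
      ≤ (Real.sqrt (σ₀ + Sax) - Real.sqrt σ₀) + Real.sqrt (σ + u) := by
        have : Real.sqrt (σ + ∑ i ∈ T, c i * y i ^ 2) = Real.sqrt (σ + u) := rfl
        linarith
    _ ≤ Real.sqrt ((σ + u) + Sax) := by linarith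
    _ ≤ Real.sqrt (σ + ∑ i, a i * x i + ∑ i, c i * y i ^ 2) := hub
    _ ≤ z := hL
end

section
/- For every permutation ((1),...,(n)) of N, every point (x,y,z) of F_σ satisfies the lifted linear polymatroid inequality Σ_{i=1}^n π_(i) x_(i) ≤ z + Σ_{i=1}^n α_(i)(x_(i) − y_(i)) − √σ, where π_(i) = √σ_(i) − √σ_(i−1) and α_(i) = a_(i)/√σ_(i), with σ_(0) = σ and σ_(i) = a_(i) + σ_(i−1). -/
lemma sqrt_diff_antitone' {u b c : ℝ} (hu : 0 ≤ u) (hub : u ≤ b) (hc : 0 ≤ c) :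
    Real.sqrt (b + c) - Real.sqrt b ≤ Real.sqrt (u + c) - Real.sqrt u := by
  have hb : 0 ≤ b := le_trans hu hub
  have h1 : Real.sqrt u ≤ Real.sqrt b := Real.sqrt_le_sqrt hub
  have h2 : Real.sqrt (u+c) ≤ Real.sqrt (b+c) := Real.sqrt_le_sqrt (by linarith)
  have h3 : Real.sqrt u ≤ Real.sqrt (u+c) := Real.sqrt_le_sqrt (by linarith)
  have h4 : Real.sqrt b ≤ Real.sqrt (b+c) := Real.sqrt_le_sqrt (by linarith)
  have e1 : Real.sqrt u ^ 2 = u := Real.sq_sqrt hu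
  have e2 : Real.sqrt b ^ 2 = b := Real.sq_sqrt hb
  have e3 : Real.sqrt (u+c) ^ 2 = u + c := Real.sq_sqrt (by linarith)
  have e4 : Real.sqrt (b+c) ^ 2 = b + c := Real.sq_sqrt (by linarith)
  have n1 : 0 ≤ Real.sqrt u := Real.sqrt_nonneg _
  have n3 : 0 ≤ Real.sqrt (u+c) := Real.sqrt_nonneg _
  nlinarith [mul_nonneg (sub_nonneg.2 h3) (sub_nonneg.2 h1),
    mul_nonneg (sub_nonneg.2 h4) (sub_nonneg.2 h2),
    mul_nonneg (sub_nonneg.2 h4) (sub_nonneg.2 h1)]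

lemma step2' {b a y : ℝ} (hb : 0 ≤ b) (ha : 0 < a) (hy0 : 0 ≤ y) (hy1 : y ≤ 1) :
    Real.sqrt (b + a) - (a / Real.sqrt (b + a)) * (1 - y) ≤ Real.sqrt (b + a * y ^ 2) := by
  have hba : 0 < b + a := by linarith
  have hs : 0 < Real.sqrt (b + a) := Real.sqrt_pos.2 hba
  have hsq : Real.sqrt (b + a) ^ 2 = b + a := Real.sq_sqrt hba.le
  have key : b + a * y ≤ Real.sqrt (b + a * y ^ 2) * Real.sqrt (b + a) := by
    rw [← Real.sqrt_mul (by nlinarith)]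
    have h1 : (b + a * y) ^ 2 ≤ (b + a * y ^ 2) * (b + a) := by nlinarith [mul_nonneg (mul_nonneg ha.le hb) (sq_nonneg (1 - y))]
    calc b + a * y ≤ Real.sqrt ((b + a * y) ^ 2) := by
          rw [Real.sqrt_sq_eq_abs]; exact le_abs_self _
      _ ≤ _ := Real.sqrt_le_sqrt h1
  rw [div_mul_eq_mul_div, sub_le_iff_le_add, ← sub_le_iff_le_add', le_div_iff₀ hs]
  nlinarith [key, hsq, Real.sqrt_nonneg (b + a * y ^ 2)]

lemma step' {u B a y : ℝ} (hu : 0 ≤ u) (huB : u ≤ B) (ha : 0 < a) (hy0 : 0 ≤ y) (hy1 : y ≤ 1) :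
    Real.sqrt (B + a) - Real.sqrt B - (a / Real.sqrt (B + a)) * (1 - y)
      ≤ Real.sqrt (u + a * y ^ 2) - Real.sqrt u := by
  have h2 := step2' (le_trans hu huB) ha hy0 hy1
  have h1 := sqrt_diff_antitone' hu huB (c := a * y ^ 2) (by positivity)
  linarith

lemma key' (σ : ℝ) (hσ : 0 ≤ σ) (b X Y : ℕ → ℝ)
    (hb : ∀ i, 0 < b i) (hX : ∀ i, X i = 0 ∨ X i = 1)
    (hY : ∀ i, 0 ≤ Y i ∧ Y i ≤ X i) (m : ℕ) :
    ∑ k ∈ Finset.range m,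
      ((Real.sqrt (σ + ∑ j ∈ Finset.range (k+1), b j)
        - Real.sqrt (σ + ∑ j ∈ Finset.range k, b j)) * X k
       - (b k / Real.sqrt (σ + ∑ j ∈ Finset.range (k+1), b j)) * (X k - Y k))
      + Real.sqrt σ
    ≤ Real.sqrt (σ + ∑ k ∈ Finset.range m, b k * Y k ^ 2) := by
  have hX1 : ∀ i, X i ≤ 1 := fun i => by rcases hX i with h | h <;> simp [h]
  have hY1 : ∀ i, Y i ≤ 1 := fun i => le_trans (hY i).2 (hX1 i)
  induction m with
  | zero => simp
  | succ m ih =>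
    rw [Finset.sum_range_succ, Finset.sum_range_succ (f := fun k => b k * Y k ^ 2)]
    set T := ∑ k ∈ Finset.range m, b k * Y k ^ 2 with hTdef
    set S := ∑ j ∈ Finset.range m, b j with hSdef
    have hT0 : 0 ≤ T := Finset.sum_nonneg fun i _ => mul_nonneg (hb i).le (sq_nonneg _)
    have hTS : T ≤ S := Finset.sum_le_sum fun i _ => by
      have h1 : Y i ^ 2 ≤ 1 := by nlinarith [(hY i).1, hY1 i]
      exact mul_le_of_le_one_right (hb i).le h1
    have hS0 : 0 ≤ S := Finset.sum_nonneg fun i _ => (hb i).le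
    rcases hX m with hxm | hxm
    · have hym : Y m = 0 := le_antisymm (by have := (hY m).2; rw [hxm] at this; exact this) (hY m).1
      rw [hxm, hym]
      simpa using ih
    · have hstep := step' (u := σ + T) (B := σ + S) (a := b m) (y := Y m)
        (by linarith) (by linarith) (hb m) (hY m).1 (hY1 m)
      have hss : ∑ j ∈ Finset.range (m+1), b j = S + b m := by
        rw [Finset.sum_range_succ]
      rw [hxm, hss]
      have h1 : σ + S + b m = σ + (S + b m) := by ring
      have h2 : σ + T + b m * Y m ^ 2 = σ + (T + b m * Y m ^ 2) := by ring
      calc ∑ k ∈ Finset.range m, _ + (_ - _) + Real.sqrt σ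
          ≤ Real.sqrt (σ + T)
            + ((Real.sqrt (σ + (S + b m)) - Real.sqrt (σ + S))
              - b m / Real.sqrt (σ + (S + b m)) * (1 - Y m)) := by
            rw [mul_one]; linarith [ih]
        _ ≤ Real.sqrt (σ + (T + b m * Y m ^ 2)) := by
            rw [← h1, ← h2] at *
            linarith [hstep]

lemma sum_fin_le' {n : ℕ} (g : ℕ → ℝ) (k : Fin n) :
    ∑ j ∈ Finset.univ.filter (fun j : Fin n => j ≤ k), g (j:ℕ)
      = ∑ j ∈ Finset.range ((k:ℕ)+1), g j := by
  rw [Finset.sum_filter]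
  have H1 : ∑ j : Fin n, (if j ≤ k then g (j:ℕ) else 0)
      = ∑ j ∈ Finset.range n, (if j ≤ (k:ℕ) then g j else 0) := by
    rw [← Fin.sum_univ_eq_sum_range (fun m => if m ≤ (k:ℕ) then g m else 0) n]
    exact Finset.sum_congr rfl fun j _ => by simp only [Fin.le_def]
  rw [H1, ← Finset.sum_subset (Finset.range_subset_range.2 k.isLt)
    (fun x _ hx => by rw [if_neg]; simpa [Nat.lt_succ_iff] using hx)]
  exact Finset.sum_congr rfl fun j hj => by
    rw [if_pos (Nat.lt_succ_iff.1 (Finset.mem_range.1 hj))]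

lemma sum_fin_lt' {n : ℕ} (g : ℕ → ℝ) (k : Fin n) :
    ∑ j ∈ Finset.univ.filter (fun j : Fin n => j < k), g (j:ℕ)
      = ∑ j ∈ Finset.range (k:ℕ), g j := by
  rw [Finset.sum_filter]
  have H1 : ∑ j : Fin n, (if j < k then g (j:ℕ) else 0)
      = ∑ j ∈ Finset.range n, (if j < (k:ℕ) then g j else 0) := by
    rw [← Fin.sum_univ_eq_sum_range (fun m => if m < (k:ℕ) then g m else 0) n]
    exact Finset.sum_congr rfl fun j _ => by simp only [Fin.lt_def]
  rw [H1, ← Finset.sum_subset (Finset.range_subset_range.2 k.isLt.le)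
    (fun x _ hx => by rw [if_neg]; simpa using hx)]
  exact Finset.sum_congr rfl fun j hj => by rw [if_pos (Finset.mem_range.1 hj)]



/-- **Validity of the lifted linear polymatroid inequality for `F_σ`.**
`F_σ = {(x,y,z) ∈ {0,1}^N × ℝ₊^N × ℝ₊ : σ + ∑ a i y i² ≤ z², 0 ≤ y ≤ x}` with
`σ ≥ 0`, `a i > 0`. For every permutation `e` of `N`, with
`σ_(0) = σ`, `σ_(i) = a_(i) + σ_(i−1)`, `π_(i) = √σ_(i) − √σ_(i−1)` and
`α_(i) = a_(i)/√σ_(i)`, every point of `F_σ` satisfies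
`∑ i, π_(i) x_(i) ≤ z + ∑ i, α_(i) (x_(i) − y_(i)) − √σ`. -/
theorem lifted_linear_polymatroid_valid
    (n : ℕ) (σ : ℝ) (a : Fin n → ℝ) (hσ : 0 ≤ σ) (ha : ∀ i, 0 < a i)
    (e : Equiv.Perm (Fin n)) (x y : Fin n → ℝ) (z : ℝ)
    (hx : ∀ i, x i = 0 ∨ x i = 1) (hy : ∀ i, 0 ≤ y i ∧ y i ≤ x i) (hz : 0 ≤ z)
    (hF : σ + ∑ i, a i * y i ^ 2 ≤ z ^ 2) :
    ∑ k, (Real.sqrt (σ + ∑ j ∈ Finset.univ.filter (fun j => j ≤ k), a (e j))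
        - Real.sqrt (σ + ∑ j ∈ Finset.univ.filter (fun j => j < k), a (e j)))
          * x (e k)
      ≤ z + ∑ k, (a (e k)
            / Real.sqrt (σ + ∑ j ∈ Finset.univ.filter (fun j => j ≤ k), a (e j)))
          * (x (e k) - y (e k))
        - Real.sqrt σ := by
  classical
  set b : ℕ → ℝ := fun j => if h : j < n then a (e ⟨j, h⟩) else 1 with hbdef
  set X : ℕ → ℝ := fun j => if h : j < n then x (e ⟨j, h⟩) else 0 with hXdef
  set Y : ℕ → ℝ := fun j => if h : j < n then y (e ⟨j, h⟩) else 0 with hYdef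
  have hbe : ∀ j : Fin n, b (j:ℕ) = a (e j) := fun j => by simp [hbdef, j.isLt]
  have hXe : ∀ j : Fin n, X (j:ℕ) = x (e j) := fun j => by simp [hXdef, j.isLt]
  have hYe : ∀ j : Fin n, Y (j:ℕ) = y (e j) := fun j => by simp [hYdef, j.isLt]
  have hb : ∀ i, 0 < b i := fun i => by
    by_cases h : i < n
    · simpa [hbdef, h] using ha (e ⟨i, h⟩)
    · simp [hbdef, h]
  have hX : ∀ i, X i = 0 ∨ X i = 1 := fun i => by
    by_cases h : i < n
    · simpa [hXdef, h] using hx (e ⟨i, h⟩)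
    · simp [hXdef, h]
  have hY : ∀ i, 0 ≤ Y i ∧ Y i ≤ X i := fun i => by
    by_cases h : i < n
    · simpa [hYdef, hXdef, h] using hy (e ⟨i, h⟩)
    · simp [hYdef, hXdef, h]
  have key := key' σ hσ b X Y hb hX hY n
  have hsumle : ∀ k : Fin n,
      ∑ j ∈ Finset.univ.filter (fun j => j ≤ k), a (e j)
        = ∑ j ∈ Finset.range ((k:ℕ)+1), b j := fun k => by
    rw [← sum_fin_le' b k]
    exact Finset.sum_congr rfl fun j _ => (hbe j).symm
  have hsumlt : ∀ k : Fin n,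
      ∑ j ∈ Finset.univ.filter (fun j => j < k), a (e j)
        = ∑ j ∈ Finset.range (k:ℕ), b j := fun k => by
    rw [← sum_fin_lt' b k]
    exact Finset.sum_congr rfl fun j _ => (hbe j).symm
  have hFb : σ + ∑ k ∈ Finset.range n, b k * Y k ^ 2 ≤ z ^ 2 := by
    have h1 : ∑ k ∈ Finset.range n, b k * Y k ^ 2 = ∑ i, a i * y i ^ 2 := by
      rw [← Fin.sum_univ_eq_sum_range (fun k => b k * Y k ^ 2) n]
      rw [← Equiv.sum_comp e (fun i => a i * y i ^ 2)]
      exact Finset.sum_congr rfl fun j _ => by rw [hbe j, hYe j]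
    rw [h1]; exact hF
  have hzge : Real.sqrt (σ + ∑ k ∈ Finset.range n, b k * Y k ^ 2) ≤ z := by
    rw [← Real.sqrt_sq hz]
    exact Real.sqrt_le_sqrt hFb
  have G1 : ∑ k : Fin n,
      (Real.sqrt (σ + ∑ j ∈ Finset.univ.filter (fun j => j ≤ k), a (e j))
        - Real.sqrt (σ + ∑ j ∈ Finset.univ.filter (fun j => j < k), a (e j))) * x (e k)
      = ∑ k ∈ Finset.range n,
        (Real.sqrt (σ + ∑ j ∈ Finset.range (k+1), b j)
          - Real.sqrt (σ + ∑ j ∈ Finset.range k, b j)) * X k := by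
    rw [← Fin.sum_univ_eq_sum_range (fun k =>
      (Real.sqrt (σ + ∑ j ∈ Finset.range (k+1), b j)
        - Real.sqrt (σ + ∑ j ∈ Finset.range k, b j)) * X k) n]
    exact Finset.sum_congr rfl fun k _ => by rw [hsumle k, hsumlt k, hXe k]
  have G2 : ∑ k : Fin n,
      (a (e k) / Real.sqrt (σ + ∑ j ∈ Finset.univ.filter (fun j => j ≤ k), a (e j)))
        * (x (e k) - y (e k))
      = ∑ k ∈ Finset.range n,
        (b k / Real.sqrt (σ + ∑ j ∈ Finset.range (k+1), b j)) * (X k - Y k) := by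
    rw [← Fin.sum_univ_eq_sum_range (fun k =>
      (b k / Real.sqrt (σ + ∑ j ∈ Finset.range (k+1), b j)) * (X k - Y k)) n]
    exact Finset.sum_congr rfl fun k _ => by rw [hsumle k, hbe k, hXe k, hYe k]
  rw [G1, G2]
  rw [Finset.sum_sub_distrib] at key
  linarith [key, hzge]
end

section
/- For any permutation ((1),...,(n)) of N, the following n+1 points belong to F_σ, satisfy the lifted linear polymatroid inequality Σ_i π_(i) x_(i) = z + Σ_i α_(i)(x_(i) − y_(i)) − √σ at equality, and are affinely independent: the point (x,y,z) = (0, 0, √σ), and for each i = 1,...,n the point (x,y,z) = (Σ_{k≤i} e_(k), Σ_{k≤i} e_(k), √σ_(i)). -/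
set_option maxRecDepth 8000


/-- The `n+1` points of the remark after Prop. 4: `(0, 0, √σ)` and, for each
`i ∈ N`, the point `(∑_{k≤i} e_(k), ∑_{k≤i} e_(k), √σ_(i))`, where `e` is the
permutation and `σ_(i) = σ + ∑_{k ≤ i} a_(k)`. -/
noncomputable def tightPoints (n : ℕ) (σ : ℝ) (a : Fin n → ℝ)
    (e : Equiv.Perm (Fin n)) : Fin (n + 1) → (Fin n → ℝ) × (Fin n → ℝ) × ℝ :=
  Fin.cons ((fun _ => 0), (fun _ => 0), Real.sqrt σ)
    (fun i => ((fun m => if e.symm m ≤ i then 1 else 0),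
               (fun m => if e.symm m ≤ i then 1 else 0),
               Real.sqrt (σ + ∑ j ∈ Finset.univ.filter (fun j => j ≤ i), a (e j))))

lemma filter_le_eq_cast (n : ℕ) (i : Fin n) :
    Finset.univ.filter (fun l : Fin n => l ≤ i)
      = Finset.univ.filter (fun l : Fin n => (l : ℕ) < (i : ℕ) + 1) := by
  ext l
  simp only [Finset.mem_filter, Finset.mem_univ, true_and, Fin.le_def]
  omega

lemma filter_lt_eq_cast (n : ℕ) (i : Fin n) :
    Finset.univ.filter (fun l : Fin n => l < i)
      = Finset.univ.filter (fun l : Fin n => (l : ℕ) < (i : ℕ)) := by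
  ext l
  simp only [Finset.mem_filter, Finset.mem_univ, true_and, Fin.lt_def]

noncomputable def gAux (n : ℕ) (σ : ℝ) (a : Fin n → ℝ) (e : Equiv.Perm (Fin n)) : ℕ → ℝ :=
  fun t => Real.sqrt (σ + ∑ l ∈ Finset.univ.filter (fun l : Fin n => (l : ℕ) < t), a (e l))

lemma gAux_zero (n : ℕ) (σ : ℝ) (a : Fin n → ℝ) (e : Equiv.Perm (Fin n)) :
    gAux n σ a e 0 = Real.sqrt σ := by
  simp [gAux]

lemma gAux_le (n : ℕ) (σ : ℝ) (a : Fin n → ℝ) (e : Equiv.Perm (Fin n)) (k : Fin n) :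
    gAux n σ a e ((k : ℕ) + 1)
      = Real.sqrt (σ + ∑ l ∈ Finset.univ.filter (fun l : Fin n => l ≤ k), a (e l)) := by
  rw [gAux, filter_le_eq_cast n k]

lemma gAux_lt (n : ℕ) (σ : ℝ) (a : Fin n → ℝ) (e : Equiv.Perm (Fin n)) (k : Fin n) :
    gAux n σ a e (k : ℕ)
      = Real.sqrt (σ + ∑ l ∈ Finset.univ.filter (fun l : Fin n => l < k), a (e l)) := by
  rw [gAux, filter_lt_eq_cast n k]

/-- **Tightness of the lifted linear polymatroid inequality.** For any
permutation `e` of `N`, the `n+1` points `tightPoints` belong to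
`F_σ = {(x,y,z) ∈ {0,1}^N × ℝ₊^N × ℝ₊ : σ + ∑ a i y i² ≤ z², 0 ≤ y ≤ x}`, satisfy the
lifted inequality `∑ π_(i) x_(i) = z + ∑ α_(i)(x_(i) − y_(i)) − √σ` at equality,
and are affinely independent. -/
theorem lifted_linear_polymatroid_tight
    (n : ℕ) (σ : ℝ) (a : Fin n → ℝ) (hσ : 0 ≤ σ) (ha : ∀ i, 0 < a i)
    (e : Equiv.Perm (Fin n)) :
    (∀ j : Fin (n + 1),
        (∀ i, (tightPoints n σ a e j).1 i = 0 ∨ (tightPoints n σ a e j).1 i = 1) ∧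
        (∀ i, 0 ≤ (tightPoints n σ a e j).2.1 i ∧
              (tightPoints n σ a e j).2.1 i ≤ (tightPoints n σ a e j).1 i) ∧
        0 ≤ (tightPoints n σ a e j).2.2 ∧
        σ + ∑ i, a i * (tightPoints n σ a e j).2.1 i ^ 2
          ≤ (tightPoints n σ a e j).2.2 ^ 2) ∧
    (∀ j : Fin (n + 1),
        ∑ k, (Real.sqrt (σ + ∑ l ∈ Finset.univ.filter (fun l => l ≤ k), a (e l))
            - Real.sqrt (σ + ∑ l ∈ Finset.univ.filter (fun l => l < k), a (e l)))
              * (tightPoints n σ a e j).1 (e k)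
          = (tightPoints n σ a e j).2.2
            + ∑ k, (a (e k)
                / Real.sqrt (σ + ∑ l ∈ Finset.univ.filter (fun l => l ≤ k), a (e l)))
              * ((tightPoints n σ a e j).1 (e k) - (tightPoints n σ a e j).2.1 (e k))
            - Real.sqrt σ) ∧
    AffineIndependent ℝ (tightPoints n σ a e) := by
  have hnonneg : ∀ s : Finset (Fin n), 0 ≤ σ + ∑ l ∈ s, a (e l) := fun s =>
    add_nonneg hσ (Finset.sum_nonneg fun l _ => (ha (e l)).le)
  set g : ℕ → ℝ := gAux n σ a e with hg
  refine ⟨?_, ?_, ?_⟩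
  · -- membership in F_σ
    intro j
    refine Fin.cases ?_ ?_ j
    · refine ⟨?_, ?_, ?_, ?_⟩ <;>
        simp [tightPoints, Real.sq_sqrt hσ, Real.sqrt_nonneg]
    · intro i
      simp only [tightPoints, Fin.cons_succ]
      refine ⟨fun m => ?_, fun m => ?_, Real.sqrt_nonneg _, ?_⟩
      · by_cases h : e.symm m ≤ i <;> simp [h]
      · by_cases h : e.symm m ≤ i <;> simp [h]
      · rw [Real.sq_sqrt (hnonneg _)]
        have : ∑ m : Fin n, a m * (if e.symm m ≤ i then (1:ℝ) else 0) ^ 2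
            = ∑ l ∈ Finset.univ.filter (fun l : Fin n => l ≤ i), a (e l) := by
          rw [← Equiv.sum_comp e (fun m => a m * (if e.symm m ≤ i then (1:ℝ) else 0) ^ 2),
            Finset.sum_filter]
          refine Finset.sum_congr rfl fun l _ => ?_
          by_cases h : l ≤ i <;> simp [h]
        rw [this]
  · -- tightness
    intro j
    refine Fin.cases ?_ ?_ j
    · simp only [tightPoints, Fin.cons_zero, mul_zero, sub_self,
        Finset.sum_const_zero, add_zero]
    · intro i
      simp only [tightPoints, Fin.cons_succ, Equiv.symm_apply_apply, sub_self, mul_zero,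
        Finset.sum_const_zero, add_zero]
      have hterm : ∀ k : Fin n,
          (Real.sqrt (σ + ∑ l ∈ Finset.univ.filter (fun l : Fin n => l ≤ k), a (e l))
            - Real.sqrt (σ + ∑ l ∈ Finset.univ.filter (fun l : Fin n => l < k), a (e l)))
              * (if k ≤ i then (1:ℝ) else 0)
            = (g ((k : ℕ) + 1) - g (k : ℕ)) * (if (k : ℕ) ≤ (i : ℕ) then (1:ℝ) else 0) := by
        intro k
        rw [hg, gAux_le, gAux_lt]
        simp only [Fin.le_def]
      rw [Finset.sum_congr rfl fun k _ => hterm k]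
      rw [Fin.sum_univ_eq_sum_range
        (fun t => (g (t + 1) - g t) * (if t ≤ (i : ℕ) then (1:ℝ) else 0))]
      have hstep : ∀ t : ℕ, (g (t + 1) - g t) * (if t ≤ (i : ℕ) then (1:ℝ) else 0)
          = if t ≤ (i : ℕ) then g (t + 1) - g t else 0 := by
        intro t; split <;> ring
      have hfilt : (Finset.range n).filter (fun t => t ≤ (i : ℕ))
          = Finset.range ((i : ℕ) + 1) := by
        have hi := i.isLt
        ext t
        simp only [Finset.mem_filter, Finset.mem_range]
        omega
      rw [Finset.sum_congr rfl fun t _ => hstep t, ← Finset.sum_filter, hfilt,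
        Finset.sum_range_sub g, hg, gAux_zero]
      rw [gAux_le n σ a e i]
  · -- affine independence
    rw [affineIndependent_iff]
    intro s w hw hsum
    set c : Fin (n + 1) → ℝ := fun j => if j ∈ s then w j else 0 with hcdef
    have hc0 : ∑ j, c j = 0 := by
      rw [hcdef]; simpa [Finset.sum_ite_mem] using hw
    have hcsum : ∑ j, c j • tightPoints n σ a e j = 0 := by
      rw [hcdef]; simpa [Finset.sum_ite_mem] using hsum
    have hx : ∀ k : Fin n, ∑ i : Fin n, c i.succ * (if k ≤ i then (1:ℝ) else 0) = 0 := by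
      intro k
      have h1 := congrArg (fun v : (Fin n → ℝ) × (Fin n → ℝ) × ℝ => v.1 (e k)) hcsum
      simp only [Prod.fst_sum, Finset.sum_apply, Pi.smul_apply, smul_eq_mul,
        Prod.smul_fst, Prod.fst_zero, Pi.zero_apply] at h1
      rw [Fin.sum_univ_succ] at h1
      simpa only [tightPoints, Fin.sum_univ_succ, Fin.cons_zero, Fin.cons_succ, mul_zero,
        zero_add, Equiv.symm_apply_apply] using h1
    have hT : ∀ k : Fin n, ∑ i ∈ Finset.univ.filter (fun i : Fin n => k ≤ i), c i.succ = 0 := by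
      intro k
      rw [Finset.sum_filter]
      have heq : ∀ i : Fin n, (if k ≤ i then c i.succ else 0)
          = c i.succ * (if k ≤ i then (1:ℝ) else 0) := by
        intro i; split <;> simp
      rw [Finset.sum_congr rfl fun i _ => heq i]
      exact hx k
    have hd : ∀ k : Fin n, c k.succ = 0 := by
      intro k
      have htail : ∑ i ∈ Finset.univ.filter (fun i : Fin n => k < i), c i.succ = 0 := by
        by_cases hlast : (k : ℕ) + 1 < n
        · have : Finset.univ.filter (fun i : Fin n => k < i)
              = Finset.univ.filter (fun i : Fin n => (⟨(k : ℕ) + 1, hlast⟩ : Fin n) ≤ i) := by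
            ext x
            simp only [Finset.mem_filter, Finset.mem_univ, true_and, Fin.lt_def, Fin.le_def]
            omega
          rw [this]; exact hT _
        · have : Finset.univ.filter (fun i : Fin n => k < i) = ∅ := by
            ext x
            simp only [Finset.mem_filter, Finset.mem_univ, true_and, Finset.notMem_empty,
              iff_false, Fin.lt_def, not_lt]
            omega
          simp [this]
      have hsplit : Finset.univ.filter (fun i : Fin n => k ≤ i)
          = insert k (Finset.univ.filter (fun i : Fin n => k < i)) := by
        ext x
        simp only [Finset.mem_filter, Finset.mem_univ, true_and, Finset.mem_insert,
          Fin.le_def, Fin.lt_def, Fin.ext_iff]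
        omega
      have hknot : k ∉ Finset.univ.filter (fun i : Fin n => k < i) := by simp
      have := hT k
      rw [hsplit, Finset.sum_insert hknot, htail, add_zero] at this
      exact this
    have hczero : ∀ j, c j = 0 := by
      intro j
      refine Fin.cases ?_ hd j
      have := hc0
      rw [Fin.sum_univ_succ] at this
      simpa [hd] using this
    intro j hj
    have := hczero j
    rw [hcdef] at this
    simpa [hj] using this
end

section
/- For S ⊆ N and a permutation ((1),...,(|S|)) of S, the following n+1 points belong to F, satisfy the inequality (π_S'x_S − α_S'(x_S − y_S))² + Σ_{i∈N∖S} a_i y_i² ≤ z² at equality, and are affinely independent: (x,y,z) = (0,0,0); (x,y,z) = (Σ_{k≤i} e_(k), Σ_{k≤i} e_(k), √σ_{S(i)}) for i = 1,...,|S|; and (x,y,z) = (e_i, e_i, √a_i) for each i ∈ N∖S. -/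
open Finset

/-- Telescoping sum of square roots of partial sums over `Fin c`. -/
lemma telescope_sqrt {c : ℕ} (b : Fin c → ℝ) (p : Fin c) :
    ∑ k ∈ univ.filter (fun k => k ≤ p),
      (Real.sqrt (∑ l ∈ univ.filter (fun l => l ≤ k), b l)
        - Real.sqrt (∑ l ∈ univ.filter (fun l => l < k), b l))
      = Real.sqrt (∑ l ∈ univ.filter (fun l => l ≤ p), b l) := by
  set F : ℕ → ℝ := fun j => Real.sqrt (∑ l ∈ univ.filter (fun l : Fin c => (l : ℕ) < j), b l)
    with hF
  have key : ∀ k : Fin c, Real.sqrt (∑ l ∈ univ.filter (fun l => l ≤ k), b l) = F (k.1 + 1) := by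
    intro k
    have : (univ.filter (fun l => l ≤ k)) = (univ.filter (fun l : Fin c => (l:ℕ) < k.1 + 1)) := by
      apply Finset.filter_congr; intro l _; rw [Fin.le_def]; omega
    rw [hF, this]
  have key2 : ∀ k : Fin c, Real.sqrt (∑ l ∈ univ.filter (fun l => l < k), b l) = F k.1 := by
    intro k
    have : (univ.filter (fun l => l < k)) = (univ.filter (fun l : Fin c => (l:ℕ) < k.1)) := by
      apply Finset.filter_congr; intro l _; rw [Fin.lt_def]
    rw [hF, this]
  have h0 : F 0 = 0 := by simp [hF]
  calc ∑ k ∈ univ.filter (fun k => k ≤ p),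
      (Real.sqrt (∑ l ∈ univ.filter (fun l => l ≤ k), b l)
        - Real.sqrt (∑ l ∈ univ.filter (fun l => l < k), b l))
      = ∑ k ∈ univ.filter (fun k => k ≤ p), (F (k.1 + 1) - F k.1) :=
        Finset.sum_congr rfl (fun k _ => by rw [key, key2])
    _ = ∑ j ∈ range (p.1 + 1), (F (j + 1) - F j) := by
        apply Finset.sum_nbij' (fun k : Fin c => (k : ℕ))
          (fun j => if h : j < c then (⟨j, h⟩ : Fin c) else p)
        · intro k hk
          simp only [mem_filter, mem_univ, true_and] at hk
          rw [Fin.le_def] at hk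
          simp only [mem_range]
          omega
        · intro j hj
          simp only [mem_range, Nat.lt_succ_iff] at hj
          have hjc : j < c := lt_of_le_of_lt hj p.2
          simp only [dif_pos hjc, mem_filter, mem_univ, true_and, Fin.le_def]
          exact hj
        · intro k hk
          simp [k.2]
        · intro j hj
          simp only [mem_range, Nat.lt_succ_iff] at hj
          have hjc : j < c := lt_of_le_of_lt hj p.2
          simp [dif_pos hjc]
        · intro k _; rfl
    _ = F (p.1 + 1) - F 0 := Finset.sum_range_sub F (p.1+1)
    _ = Real.sqrt (∑ l ∈ univ.filter (fun l => l ≤ p), b l) := by rw [h0, key p]; ring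

/-- A sum over all of `Fin n` of a function vanishing off `S` equals the sum over the
positions of the permutation `e` of `S`. -/
lemma sum_univ_eq_sum_perm {n : ℕ} (S : Finset (Fin n)) (e : Fin S.card ≃ {i // i ∈ S})
    (f : Fin n → ℝ) (hf : ∀ m ∉ S, f m = 0) :
    ∑ m, f m = ∑ k, f (e k) := by
  have h1 : ∑ m, f m = ∑ m ∈ S, f m :=
    (Finset.sum_subset (Finset.subset_univ S) (fun m _ hm => hf m hm)).symm
  rw [h1, ← Finset.sum_coe_sort S f, ← Equiv.sum_comp e (fun m : {i // i ∈ S} => f m)]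

/-- The "discrete difference along the permutation" linear map, sending the staircase
indicator vectors to standard basis vectors. -/
noncomputable def diffMap (n : ℕ) (S : Finset (Fin n)) (e : Fin S.card ≃ {i // i ∈ S}) :
    ((Fin n → ℝ) × (Fin n → ℝ) × ℝ) →ₗ[ℝ] (Fin n → ℝ) where
  toFun v m :=
    if hm : m ∈ S then
      v.1 m - (if h : ((e.symm ⟨m, hm⟩ : Fin S.card) : ℕ) + 1 < S.card
        then v.1 (e ⟨(e.symm ⟨m, hm⟩ : ℕ) + 1, h⟩) else 0)
    else v.1 m
  map_add' u v := by
    funext m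
    by_cases hm : m ∈ S
    · simp only [dif_pos hm, Prod.fst_add, Pi.add_apply]
      split_ifs <;> ring
    · simp only [dif_neg hm, Prod.fst_add, Pi.add_apply]
  map_smul' r v := by
    funext m
    by_cases hm : m ∈ S
    · simp only [dif_pos hm, Prod.smul_fst, Pi.smul_apply, smul_eq_mul, RingHom.id_apply]
      split_ifs <;> ring
    · simp only [dif_neg hm, Prod.smul_fst, Pi.smul_apply, smul_eq_mul, RingHom.id_apply]

open Finset in
/-- The `n+1` points of the remark after inequality (8): `(0,0,0)`; for each
`i = 1,...,|S|` the point `(∑_{k≤i} e_(k), ∑_{k≤i} e_(k), √σ_{S(i)})` (here indexed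
by the element of `S` in position `i` of the permutation `e`); and `(e_i, e_i, √a_i)`
for each `i ∈ N∖S`. -/
noncomputable def tightPointsI (n : ℕ) (a : Fin n → ℝ) (S : Finset (Fin n))
    (e : Fin S.card ≃ {i // i ∈ S}) :
    Option (Fin n) → (Fin n → ℝ) × (Fin n → ℝ) × ℝ
  | none => ((fun _ => 0), (fun _ => 0), 0)
  | some i =>
    if h : i ∈ S then
      ((fun m => if hm : m ∈ S then
          (if e.symm ⟨m, hm⟩ ≤ e.symm ⟨i, h⟩ then 1 else 0) else 0),
       (fun m => if hm : m ∈ S then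
          (if e.symm ⟨m, hm⟩ ≤ e.symm ⟨i, h⟩ then 1 else 0) else 0),
       Real.sqrt (∑ j ∈ univ.filter (fun j => j ≤ e.symm ⟨i, h⟩), a (e j)))
    else
      ((fun m => if m = i then 1 else 0), (fun m => if m = i then 1 else 0),
       Real.sqrt (a i))

/-- The `x` and `y` components of each tight point coincide. -/
lemma tightPointsI_xy (n : ℕ) (a : Fin n → ℝ) (S : Finset (Fin n))
    (e : Fin S.card ≃ {i // i ∈ S}) (j : Option (Fin n)) :
    (tightPointsI n a S e j).2.1 = (tightPointsI n a S e j).1 := by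
  cases j with
  | none => rfl
  | some i =>
      by_cases h : i ∈ S
      · simp only [tightPointsI, dif_pos h]
      · simp only [tightPointsI, dif_neg h]

/-- Value of the `x` component at an element of `S`, for a point indexed by `i ∈ S`. -/
lemma tightPointsI_x_mem (n : ℕ) (a : Fin n → ℝ) (S : Finset (Fin n))
    (e : Fin S.card ≃ {i // i ∈ S}) (i : Fin n) (h : i ∈ S) (k : Fin S.card) :
    (tightPointsI n a S e (some i)).1 (e k)
      = if k ≤ e.symm ⟨i, h⟩ then 1 else 0 := by
  simp only [tightPointsI, dif_pos h]
  rw [dif_pos (e k).2]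
  have : (⟨((e k : {x // x ∈ S}) : Fin n), (e k).2⟩ : {x // x ∈ S}) = e k := Subtype.coe_eta _ _
  rw [this, Equiv.symm_apply_apply]

/-- Value of the `x` component at an element of `S`, for a point indexed by `i ∉ S`. -/
lemma tightPointsI_x_notmem (n : ℕ) (a : Fin n → ℝ) (S : Finset (Fin n))
    (e : Fin S.card ≃ {i // i ∈ S}) (i : Fin n) (h : i ∉ S) (k : Fin S.card) :
    (tightPointsI n a S e (some i)).1 (e k) = 0 := by
  simp only [tightPointsI, dif_neg h]
  have : ((e k : {x // x ∈ S}) : Fin n) ≠ i := fun hr => h (hr ▸ (e k).2)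
  rw [if_neg this]

/-- The difference map sends each nonzero tight point to a standard basis vector. -/
lemma diffMap_tightPointsI (n : ℕ) (a : Fin n → ℝ) (S : Finset (Fin n))
    (e : Fin S.card ≃ {i // i ∈ S}) (i : Fin n) :
    diffMap n S e (tightPointsI n a S e (some i)) = Pi.single i 1 := by
  funext m
  by_cases h : i ∈ S
  · simp only [tightPointsI, dif_pos h, diffMap, LinearMap.coe_mk, AddHom.coe_mk,
      Pi.single_apply]
    by_cases hm : m ∈ S
    · simp only [dif_pos hm]
      set p : Fin S.card := e.symm ⟨i, h⟩ with hp
      set q : Fin S.card := e.symm ⟨m, hm⟩ with hq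
      have hmi : (m = i) ↔ (q = p) := by
        constructor
        · intro hmi; rw [hq, hp]; congr 1; exact Subtype.ext hmi
        · intro hqp
          have : (⟨m, hm⟩ : {x // x ∈ S}) = ⟨i, h⟩ := by
            have := congrArg e hqp
            rwa [hq, hp, Equiv.apply_symm_apply, Equiv.apply_symm_apply] at this
          exact congrArg Subtype.val this
      rw [if_congr hmi rfl rfl]
      by_cases h2 : (q : ℕ) + 1 < S.card
      · rw [dif_pos h2]
        have : e.symm ⟨(e ⟨(q : ℕ) + 1, h2⟩ : {x // x ∈ S}),
            (e ⟨(q : ℕ) + 1, h2⟩).2⟩ = ⟨(q : ℕ) + 1, h2⟩ := by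
          rw [Subtype.coe_eta, Equiv.symm_apply_apply]
        simp only [dif_pos (e ⟨(q : ℕ) + 1, h2⟩).2, this]
        simp only [Fin.le_def, Fin.ext_iff]
        split_ifs <;> first | (exfalso; omega) | norm_num
      · rw [dif_neg h2]
        have hpq : (p : ℕ) ≤ (q : ℕ) := by omega
        simp only [Fin.le_def, Fin.ext_iff]
        split_ifs <;> first | (exfalso; omega) | norm_num
    · simp only [dif_neg hm, Pi.single_apply]
      have : m ≠ i := fun hmi => hm (hmi ▸ h)
      simp [this]
  · simp only [tightPointsI, dif_neg h, diffMap, LinearMap.coe_mk, AddHom.coe_mk,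
      Pi.single_apply]
    by_cases hm : m ∈ S
    · simp only [dif_pos hm]
      have h1 : m ≠ i := fun hmi => h (hmi ▸ hm)
      have h2 : ∀ (r : Fin S.card), ((e r : {x // x ∈ S}) : Fin n) ≠ i :=
        fun r hr => h (hr ▸ (e r).2)
      simp only [if_neg h1]
      split_ifs with h3 h4
      · exact absurd h4 (h2 _)
      · norm_num
      · norm_num
    · simp [dif_neg hm]

/-- `Fin n` is equivalent to the nonzero options. -/
def optEquiv (n : ℕ) : Fin n ≃ {x : Option (Fin n) // x ≠ none} where
  toFun i := ⟨some i, by simp⟩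
  invFun j := j.1.get (Option.ne_none_iff_isSome.mp j.2)
  left_inv i := rfl
  right_inv j := Subtype.ext (Option.some_get _)

/-- **Tightness of the lifted nonlinear polymatroid inequality I.** For `S ⊆ N`
and a permutation `e` of `S`, the `n+1` points `tightPointsI` belong to
`F = {(x,y,z) ∈ {0,1}^N × ℝ₊^N × ℝ₊ : ∑ a i y i² ≤ z², 0 ≤ y ≤ x}`, satisfy
`(π_S'x_S − α_S'(x_S − y_S))² + ∑_{i∈N∖S} a i y i² = z²`, and are affinely
independent. -/
theorem lifted_nonlinear_polymatroid_I_tight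
    (n : ℕ) (a : Fin n → ℝ) (ha : ∀ i, 0 < a i)
    (S : Finset (Fin n)) (e : Fin S.card ≃ {i // i ∈ S}) :
    (∀ j : Option (Fin n),
        (∀ i, (tightPointsI n a S e j).1 i = 0 ∨ (tightPointsI n a S e j).1 i = 1) ∧
        (∀ i, 0 ≤ (tightPointsI n a S e j).2.1 i ∧
              (tightPointsI n a S e j).2.1 i ≤ (tightPointsI n a S e j).1 i) ∧
        0 ≤ (tightPointsI n a S e j).2.2 ∧
        ∑ i, a i * (tightPointsI n a S e j).2.1 i ^ 2
          ≤ (tightPointsI n a S e j).2.2 ^ 2) ∧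
    (∀ j : Option (Fin n),
        (∑ k, (Real.sqrt (∑ l ∈ Finset.univ.filter (fun l => l ≤ k), a (e l))
              - Real.sqrt (∑ l ∈ Finset.univ.filter (fun l => l < k), a (e l)))
                * (tightPointsI n a S e j).1 (e k)
          - ∑ k, (a (e k)
                / Real.sqrt (∑ l ∈ Finset.univ.filter (fun l => l ≤ k), a (e l)))
                * ((tightPointsI n a S e j).1 (e k)
                    - (tightPointsI n a S e j).2.1 (e k))) ^ 2
          + ∑ i ∈ Finset.univ \ S, a i * (tightPointsI n a S e j).2.1 i ^ 2
          = (tightPointsI n a S e j).2.2 ^ 2) ∧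
    AffineIndependent ℝ (tightPointsI n a S e) := by
  -- `x = 0`/`x = 1` values and shared facts
  have hx01 : ∀ j : Option (Fin n), ∀ i,
      (tightPointsI n a S e j).1 i = 0 ∨ (tightPointsI n a S e j).1 i = 1 := by
    intro j i
    cases j with
    | none => left; rfl
    | some m =>
        by_cases h : m ∈ S
        · simp only [tightPointsI, dif_pos h]
          by_cases hi : i ∈ S
          · rw [dif_pos hi]; split_ifs <;> simp
          · left; rw [dif_neg hi]
        · simp only [tightPointsI, dif_neg h]
          split_ifs <;> simp
  -- the key computation of `∑ a i * y i ^ 2` (an equality)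
  have hsum : ∀ j : Option (Fin n),
      ∑ i, a i * (tightPointsI n a S e j).2.1 i ^ 2 = (tightPointsI n a S e j).2.2 ^ 2 := by
    intro j
    cases j with
    | none => simp [tightPointsI]
    | some i =>
        by_cases h : i ∈ S
        · set p : Fin S.card := e.symm ⟨i, h⟩ with hp
          have hz : (tightPointsI n a S e (some i)).2.2
              = Real.sqrt (∑ l ∈ univ.filter (fun l => l ≤ p), a (e l)) := by
            simp only [tightPointsI, dif_pos h]
            rw [hp]
          have hvanish : ∀ m ∉ S, a m * (tightPointsI n a S e (some i)).1 m ^ 2 = 0 := by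
            intro m hm
            simp [tightPointsI, dif_pos h, dif_neg hm]
          rw [tightPointsI_xy, hz,
            sum_univ_eq_sum_perm S e (fun m => a m * (tightPointsI n a S e (some i)).1 m ^ 2)
              hvanish,
            Real.sq_sqrt (Finset.sum_nonneg (fun l _ => (ha _).le))]
          rw [Finset.sum_filter]
          apply Finset.sum_congr rfl
          intro k _
          rw [tightPointsI_x_mem n a S e i h k]
          split_ifs <;> ring
        · have hz : (tightPointsI n a S e (some i)).2.2 = Real.sqrt (a i) := by
            simp only [tightPointsI, dif_neg h]
          have hy : (tightPointsI n a S e (some i)).2.1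
              = fun m => if m = i then 1 else 0 := by
            simp only [tightPointsI, dif_neg h]
          rw [hz, hy, Real.sq_sqrt (ha i).le]
          have : ∀ m : Fin n, a m * (if m = i then (1:ℝ) else 0) ^ 2
              = if m = i then a m else 0 := by
            intro m; split_ifs <;> ring
          rw [Finset.sum_congr rfl (fun m _ => this m), Finset.sum_ite_eq' univ i a]
          simp
  refine ⟨?_, ?_, ?_⟩
  · -- membership in F
    intro j
    refine ⟨hx01 j, ?_, ?_, le_of_eq (hsum j)⟩
    · intro i
      rw [tightPointsI_xy]
      rcases hx01 j i with h | h <;> rw [h] <;> norm_num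
    · cases j with
      | none => exact le_refl 0
      | some i =>
          by_cases h : i ∈ S
          · simp only [tightPointsI, dif_pos h]
            exact Real.sqrt_nonneg _
          · simp only [tightPointsI, dif_neg h]
            exact Real.sqrt_nonneg _
  · -- the inequality is tight
    intro j
    cases j with
    | none =>
        simp [tightPointsI]
    | some i =>
        rw [tightPointsI_xy]
        by_cases h : i ∈ S
        · set p : Fin S.card := e.symm ⟨i, h⟩ with hp
          have hz : (tightPointsI n a S e (some i)).2.2
              = Real.sqrt (∑ l ∈ univ.filter (fun l => l ≤ p), a (e l)) := by
            simp only [tightPointsI, dif_pos h]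
            rw [hp]
          have hfirst : ∑ k, (Real.sqrt (∑ l ∈ Finset.univ.filter (fun l => l ≤ k), a (e l))
              - Real.sqrt (∑ l ∈ Finset.univ.filter (fun l => l < k), a (e l)))
                * (tightPointsI n a S e (some i)).1 (e k)
              = Real.sqrt (∑ l ∈ univ.filter (fun l => l ≤ p), a (e l)) := by
            rw [← telescope_sqrt (fun l => a (e l)) p, Finset.sum_filter]
            apply Finset.sum_congr rfl
            intro k _
            rw [tightPointsI_x_mem n a S e i h k]
            split_ifs <;> ring
          have hsecond : ∑ m ∈ Finset.univ \ S,
              a m * (tightPointsI n a S e (some i)).1 m ^ 2 = 0 := by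
            apply Finset.sum_eq_zero
            intro m hm
            rw [Finset.mem_sdiff] at hm
            simp [tightPointsI, dif_pos h, dif_neg hm.2]
          rw [hfirst, hsecond, hz]
          simp [sub_self]
        · have hz : (tightPointsI n a S e (some i)).2.2 = Real.sqrt (a i) := by
            simp only [tightPointsI, dif_neg h]
          have hfirst : ∀ k : Fin S.card, (tightPointsI n a S e (some i)).1 (e k) = 0 :=
            tightPointsI_x_notmem n a S e i h
          have hsecond : ∑ m ∈ Finset.univ \ S,
              a m * (tightPointsI n a S e (some i)).1 m ^ 2 = a i := by
            have hx : (tightPointsI n a S e (some i)).1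
                = fun m => if m = i then 1 else 0 := by
              simp only [tightPointsI, dif_neg h]
            rw [hx]
            have : ∀ m : Fin n, a m * (if m = i then (1:ℝ) else 0) ^ 2
                = if m = i then a m else 0 := by
              intro m; split_ifs <;> ring
            rw [Finset.sum_congr rfl (fun m _ => this m),
              Finset.sum_ite_eq' (Finset.univ \ S) i a]
            rw [if_pos (Finset.mem_sdiff.mpr ⟨Finset.mem_univ i, h⟩)]
          rw [hsecond, hz, Real.sq_sqrt (ha i).le]
          simp [hfirst, sub_self]
  · -- affine independence
    rw [affineIndependent_iff_linearIndependent_vsub ℝ _ none]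
    have h0 : tightPointsI n a S e none = 0 := rfl
    have hfam : (fun (j : {x : Option (Fin n) // x ≠ none}) =>
        tightPointsI n a S e ↑j -ᵥ tightPointsI n a S e none)
        = fun (j : {x : Option (Fin n) // x ≠ none}) => tightPointsI n a S e ↑j := by
      funext j
      rw [vsub_eq_sub, h0, sub_zero]
    rw [hfam, ← linearIndependent_equiv (optEquiv n)]
    apply LinearIndependent.of_comp (diffMap n S e)
    have hcomp : (⇑(diffMap n S e) ∘ ((fun (j : {x : Option (Fin n) // x ≠ none}) =>
        tightPointsI n a S e ↑j) ∘ (optEquiv n)))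
        = fun i : Fin n => Pi.single i (1:ℝ) := by
      funext i
      exact diffMap_tightPointsI n a S e i
    rw [hcomp]
    have hbasis := (Pi.basisFun ℝ (Fin n)).linearIndependent
    have heq : ⇑(Pi.basisFun ℝ (Fin n)) = fun i : Fin n => Pi.single i (1:ℝ) := by
      funext i; simp [Pi.basisFun_apply]
    rwa [heq] at hbasis
end

section
/- If ỹ is an optimal solution to (COPT), then ỹ_i ≥ ỹ_k for all 1 ≤ i < k ≤ n; that is, the coordinates of an optimal solution are nonincreasing in the given ordering. -/
lemma sum_pair_diff {n : ℕ} {i k : Fin n} (hik : i ≠ k) (f g : Fin n → ℝ)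
    (h : ∀ j, j ≠ i → j ≠ k → f j = g j) :
    ∑ j, f j = ∑ j, g j + (f i - g i) + (f k - g k) := by
  have h1 : ∑ j, (f j - g j) = ∑ j ∈ ({i, k} : Finset (Fin n)), (f j - g j) := by
    refine (Finset.sum_subset (Finset.subset_univ _) ?_).symm
    intro j _ hj
    simp only [Finset.mem_insert, Finset.mem_singleton, not_or] at hj
    rw [h j hj.1 hj.2]; ring
  rw [Finset.sum_pair hik] at h1
  have h2 : ∑ j, (f j - g j) = ∑ j, f j - ∑ j, g j := Finset.sum_sub_distrib f g
  linarith

set_option maxHeartbeats 1000000 in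
/-- **Monotone structure of optimal solutions of (COPT).**
(COPT) is `min { ∑ c̃ i y i + √(∑ a i y i²) : 0 ≤ y ≤ 1 }` with `a i > 0`,
`c̃ i < 0`, and indices sorted so that `c̃ i / a i` is nondecreasing. If `ỹ` is
optimal, then `ỹ i ≥ ỹ k` whenever `i < k`. -/
theorem copt_monotone
    (n : ℕ) (a c : Fin n → ℝ) (ha : ∀ i, 0 < a i) (hc : ∀ i, c i < 0)
    (hsort : ∀ i j : Fin n, i ≤ j → c i / a i ≤ c j / a j)
    (y : Fin n → ℝ) (hy : ∀ i, 0 ≤ y i ∧ y i ≤ 1)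
    (hopt : ∀ y' : Fin n → ℝ, (∀ i, 0 ≤ y' i ∧ y' i ≤ 1) →
      ∑ i, c i * y i + Real.sqrt (∑ i, a i * y i ^ 2)
        ≤ ∑ i, c i * y' i + Real.sqrt (∑ i, a i * y' i ^ 2)) :
    ∀ i k : Fin n, i < k → y k ≤ y i := by
  intro i k hik'
  by_contra hcon
  push_neg at hcon
  have hik : i ≠ k := ne_of_lt hik'
  obtain ⟨hyi0, hyi1⟩ := hy i
  obtain ⟨hyk0, hyk1⟩ := hy k
  have hyk0' : 0 < y k := lt_of_le_of_lt hyi0 hcon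
  have hai := ha i; have hak := ha k
  have hci := hc i; have hck := hc k
  have hsum : 0 < y i + y k := by linarith
  set lam : ℝ := 2 * a k * y k / (a i * (y i + y k)) with hlam
  have hlam0 : 0 < lam := by positivity
  set g : ℝ := 2 * a k * y k - 2 * a i * lam * y i with hg
  have hg0 : 0 < g := by
    have hexp : a i * lam * y i * (y i + y k) = 2 * a k * y k * y i := by
      rw [hlam]; field_simp
    rw [hg]
    nlinarith [mul_pos hak hyk0', mul_pos (mul_pos (by norm_num : (0:ℝ)<2) hak) hyk0']
  have hden : 0 < a i * lam ^ 2 + a k := by positivity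
  have hyi1' : y i < 1 := lt_of_lt_of_le hcon hyk1
  have h1yi : 0 < 1 - y i := by linarith
  set ε : ℝ := min (min (y k) ((1 - y i) / lam)) (g / (a i * lam ^ 2 + a k)) with hε
  have hε0 : 0 < ε := by
    apply lt_min (lt_min hyk0' (div_pos h1yi hlam0))
    exact div_pos hg0 hden
  have hε1 : ε ≤ y k := le_trans (min_le_left _ _) (min_le_left _ _)
  have hε2 : ε ≤ (1 - y i) / lam := le_trans (min_le_left _ _) (min_le_right _ _)
  have hε3 : ε ≤ g / (a i * lam ^ 2 + a k) := min_le_right _ _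
  have hε2' : lam * ε ≤ 1 - y i := by
    calc lam * ε ≤ lam * ((1 - y i) / lam) :=
          mul_le_mul_of_nonneg_left hε2 (le_of_lt hlam0)
      _ = 1 - y i := by field_simp
  have hε3' : (a i * lam ^ 2 + a k) * ε ≤ g := by
    calc (a i * lam ^ 2 + a k) * ε ≤ (a i * lam ^ 2 + a k) * (g / (a i * lam ^ 2 + a k)) :=
          mul_le_mul_of_nonneg_left hε3 (le_of_lt hden)
      _ = g := by field_simp
  clear_value lam g ε
  obtain ⟨y', hy'i, hy'k, hy'o⟩ :
      ∃ y' : Fin n → ℝ, y' i = y i + lam * ε ∧ y' k = y k - ε ∧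
        ∀ j, j ≠ i → j ≠ k → y' j = y j := by
    refine ⟨fun j => if j = i then y i + lam * ε else if j = k then y k - ε else y j,
      by simp, by simp [hik.symm], fun j hji hjk => by simp [hji, hjk]⟩
  have hfeas : ∀ j, 0 ≤ y' j ∧ y' j ≤ 1 := by
    intro j
    rcases eq_or_ne j i with rfl | hji
    · rw [hy'i]
      constructor
      · nlinarith [mul_pos hlam0 hε0]
      · linarith
    rcases eq_or_ne j k with rfl | hjk
    · rw [hy'k]; constructor <;> linarith
    · rw [hy'o j hji hjk]; exact hy j
  -- linear term strictly decreases
  have hca : c i * a k ≤ c k * a i := by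
    have := hsort i k (le_of_lt hik')
    rw [div_le_div_iff₀ hai hak] at this
    linarith
  have hlc : lam * c i < c k := by
    rw [hlam, div_mul_eq_mul_div, div_lt_iff₀ (by positivity)]
    nlinarith [mul_le_mul_of_nonneg_left hca (by positivity : (0:ℝ) ≤ 2 * y k),
      mul_lt_mul_of_neg_left (show y i + y k < 2 * y k by linarith)
        (mul_neg_of_neg_of_pos hck hai)]
  have hCsum : ∑ j, c j * y' j = ∑ j, c j * y j + (c i * y' i - c i * y i)
      + (c k * y' k - c k * y k) := by
    apply sum_pair_diff hik
    intro j hji hjk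
    rw [hy'o j hji hjk]
  have hC : ∑ j, c j * y' j < ∑ j, c j * y j := by
    rw [hCsum, hy'i, hy'k]
    nlinarith [mul_pos hε0 (sub_pos.mpr hlc)]
  -- quadratic term does not increase
  have hQsum : ∑ j, a j * y' j ^ 2 = ∑ j, a j * y j ^ 2 + (a i * y' i ^ 2 - a i * y i ^ 2)
      + (a k * y' k ^ 2 - a k * y k ^ 2) := by
    apply sum_pair_diff hik
    intro j hji hjk
    rw [hy'o j hji hjk]
  have hQ : ∑ j, a j * y' j ^ 2 ≤ ∑ j, a j * y j ^ 2 := by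
    have hε3'' := hε3'
    rw [hg] at hε3''
    rw [hQsum, hy'i, hy'k]
    nlinarith [mul_le_mul_of_nonneg_right hε3'' (le_of_lt hε0)]
  have hsqrt : Real.sqrt (∑ j, a j * y' j ^ 2) ≤ Real.sqrt (∑ j, a j * y j ^ 2) :=
    Real.sqrt_le_sqrt hQ
  have := hopt y' hfeas
  linarith
end

section
/- If −c̃_i > a_i/√(Σ_{j∈N} a_j) for every i ∈ N, then the all-ones vector ỹ = (1,1,...,1) is an optimal solution to (COPT). -/
/-- **All-ones optimality for (COPT).** (COPT) is
`min { ∑ c̃ i y i + √(∑ a i y i²) : 0 ≤ y ≤ 1 }` with `a i > 0`, `c̃ i < 0`.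
If `−c̃ i > a i / √(∑ j, a j)` for every `i`, then the all-ones vector is optimal. -/
theorem copt_all_ones_optimal
    (n : ℕ) (a c : Fin n → ℝ) (ha : ∀ i, 0 < a i) (hc : ∀ i, c i < 0)
    (hbig : ∀ i, a i / Real.sqrt (∑ j, a j) < -(c i)) :
    ∀ y : Fin n → ℝ, (∀ i, 0 ≤ y i ∧ y i ≤ 1) →
      ∑ i, c i * (1 : ℝ) + Real.sqrt (∑ i, a i * (1 : ℝ) ^ 2)
        ≤ ∑ i, c i * y i + Real.sqrt (∑ i, a i * y i ^ 2) := by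
  intro y hy
  rcases Nat.eq_zero_or_pos n with hn | hn
  · subst hn; simp
  set S : ℝ := ∑ i, a i with hSdef
  have hSpos : 0 < S := Finset.sum_pos (fun i _ => ha i) (by
    simpa using Finset.univ_nonempty_iff.2 (Fin.pos_iff_nonempty.1 hn))
  set s : ℝ := Real.sqrt S with hsdef
  have hspos : 0 < s := Real.sqrt_pos.2 hSpos
  have hs2 : s ^ 2 = S := Real.sq_sqrt hSpos.le
  set Q : ℝ := ∑ i, a i * y i ^ 2 with hQdef
  have hQ0 : 0 ≤ Q := Finset.sum_nonneg fun i _ => mul_nonneg (ha i).le (sq_nonneg _)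
  set g : ℝ := Real.sqrt Q with hgdef
  have hg0 : 0 ≤ g := Real.sqrt_nonneg _
  have hg2 : g ^ 2 = Q := Real.sq_sqrt hQ0
  set A : ℝ := ∑ i, a i * y i with hAdef
  have hA0 : 0 ≤ A := Finset.sum_nonneg fun i _ => mul_nonneg (ha i).le (hy i).1
  -- Cauchy–Schwarz: A² ≤ S * Q
  have hCS : A ^ 2 ≤ S * Q := by
    have := Finset.sum_mul_sq_le_sq_mul_sq Finset.univ
      (fun i => Real.sqrt (a i)) (fun i => Real.sqrt (a i) * y i)
    have e1 : ∀ i : Fin n, Real.sqrt (a i) * (Real.sqrt (a i) * y i) = a i * y i := by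
      intro i
      rw [← mul_assoc, Real.mul_self_sqrt (ha i).le]
    have e2 : ∀ i : Fin n, Real.sqrt (a i) ^ 2 = a i := fun i => Real.sq_sqrt (ha i).le
    have e3 : ∀ i : Fin n, (Real.sqrt (a i) * y i) ^ 2 = a i * y i ^ 2 := by
      intro i; rw [mul_pow, e2]
    simp only [e1, e2, e3] at this
    simpa [hAdef, hSdef, hQdef] using this
  have hAsg : A ≤ s * g := by
    nlinarith [mul_nonneg hspos.le hg0, sq_nonneg (A - s * g), sq_nonneg (A + s * g)]
  -- bound on linear part
  have h1 : ∑ i, (a i / s) * (1 - y i) ≤ ∑ i, (-(c i)) * (1 - y i) := by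
    apply Finset.sum_le_sum
    intro i _
    apply mul_le_mul_of_nonneg_right (hbig i).le
    linarith [(hy i).2]
  have hsum1 : ∑ i, (a i / s) * (1 - y i) = (S - A) / s := by
    rw [eq_div_iff hspos.ne', Finset.sum_mul]
    rw [hSdef, hAdef, ← Finset.sum_sub_distrib]
    apply Finset.sum_congr rfl
    intro i _
    field_simp
  have hsum2 : ∑ i, (-(c i)) * (1 - y i) = (∑ i, c i * y i) - ∑ i, c i * (1:ℝ) := by
    rw [← Finset.sum_sub_distrib]
    apply Finset.sum_congr rfl
    intro i _; ring
  rw [hsum1, hsum2] at h1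
  have h2 : S - A ≤ s * ((∑ i, c i * y i) - ∑ i, c i * (1:ℝ)) := by
    rw [div_le_iff₀ hspos] at h1
    linarith [h1]
  have hgoalL : Real.sqrt (∑ i, a i * (1:ℝ) ^ 2) = s := by
    simp [hsdef, hSdef]
  rw [hgoalL]
  nlinarith [h2, hAsg, hs2, hspos]
end

section
/- If Σ_{i∈N} c̃_i²/a_i = 1 and −c̃_i/a_i ≤ 1 for every i ∈ N, then the vector ỹ with ỹ_i = −c̃_i/a_i for all i ∈ N is an optimal solution to (COPT). -/
/-- **Closed-form interior optimum for (COPT).** (COPT) is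
`min { ∑ c̃ i y i + √(∑ a i y i²) : 0 ≤ y ≤ 1 }` with `a i > 0`, `c̃ i < 0`.
If `∑ i, c̃ i² / a i = 1` and `−c̃ i / a i ≤ 1` for every `i`, then the vector
`ỹ` with `ỹ i = −c̃ i / a i` is feasible and optimal. -/
theorem copt_interior_optimal
    (n : ℕ) (a c : Fin n → ℝ) (ha : ∀ i, 0 < a i) (hc : ∀ i, c i < 0)
    (hnorm : ∑ i, c i ^ 2 / a i = 1) (hle : ∀ i, -(c i) / a i ≤ 1) :
    (∀ i, 0 ≤ -(c i) / a i ∧ -(c i) / a i ≤ 1) ∧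
    ∀ y : Fin n → ℝ, (∀ i, 0 ≤ y i ∧ y i ≤ 1) →
      ∑ i, c i * (-(c i) / a i)
          + Real.sqrt (∑ i, a i * (-(c i) / a i) ^ 2)
        ≤ ∑ i, c i * y i + Real.sqrt (∑ i, a i * y i ^ 2) := by
  constructor
  · intro i
    exact ⟨div_nonneg (neg_nonneg.2 (hc i).le) (ha i).le, hle i⟩
  · intro y _
    have h1 : ∑ i, c i * (-(c i) / a i) = -1 := by
      rw [← hnorm, ← Finset.sum_neg_distrib]
      refine Finset.sum_congr rfl fun i _ => ?_
      ring
    have h2 : ∑ i, a i * (-(c i) / a i) ^ 2 = 1 := by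
      rw [← hnorm]
      refine Finset.sum_congr rfl fun i _ => ?_
      have := (ha i).ne'
      field_simp
    rw [h1, h2, Real.sqrt_one]
    have key := Real.sum_mul_le_sqrt_mul_sqrt Finset.univ
      (fun i => -(c i) / Real.sqrt (a i)) (fun i => Real.sqrt (a i) * y i)
    have e1 : ∑ i, (-(c i) / Real.sqrt (a i)) * (Real.sqrt (a i) * y i)
        = -∑ i, c i * y i := by
      rw [← Finset.sum_neg_distrib]
      refine Finset.sum_congr rfl fun i _ => ?_
      have hs : Real.sqrt (a i) ≠ 0 := (Real.sqrt_pos.2 (ha i)).ne'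
      field_simp
    have e2 : ∑ i, (-(c i) / Real.sqrt (a i)) ^ 2 = 1 := by
      rw [← hnorm]
      refine Finset.sum_congr rfl fun i _ => ?_
      rw [div_pow, Real.sq_sqrt (ha i).le, neg_pow]
      ring
    have e3 : ∑ i, (Real.sqrt (a i) * y i) ^ 2 = ∑ i, a i * y i ^ 2 := by
      refine Finset.sum_congr rfl fun i _ => ?_
      rw [mul_pow, Real.sq_sqrt (ha i).le]
    rw [e1, e2, e3, Real.sqrt_one, one_mul] at key
    linarith
end
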